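/- arXiv:math/0505052 — 10 statements merged into one kernel-verified Lean document; each statement's English description precedes it below -/
import Mathlib

section
/- Let p be an odd prime. In (ZMod p)[ξ, η] one has the identity ∏_{i=0}^{p−1} ∏_{j=0}^{p−1} (1 + i·ξ + j·η) = 1 − q + r^(p−1). -/
-- Auxiliary lemmas

open Polynomial in
lemma aux_prodXsub (p : ℕ) [Fact p.Prime] :
    ∏ c : ZMod p, (X - C c) = (X ^ p - X : (ZMod p)[X]) := by
  have hmonic : (X ^ p - X : (ZMod p)[X]).Monic := by
    apply monic_X_pow_sub
    rw [Polynomial.degree_X]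
    exact_mod_cast (Fact.out : p.Prime).one_lt
  have hroots : (X ^ p - X : (ZMod p)[X]).roots = Finset.univ.val := by
    convert FiniteField.roots_X_pow_card_sub_X (ZMod p)
    · rfl
    exact (ZMod.card p).symm
  have := (GaloisField.splits_zmod_X_pow_sub_X p).eq_prod_roots_of_monic hmonic
  rw [hroots] at this
  rw [this, Finset.prod_eq_multiset_prod]

lemma aux_field_t (p : ℕ) [Fact p.Prime] {F : Type*} [Field F] (φ : ZMod p →+* F) (t : F) :
    ∏ c : ZMod p, (t + φ c) = t ^ p - t := by
  have h1 : ∏ c : ZMod p, (t + φ c) = ∏ c : ZMod p, (t - φ c) := by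
    apply Fintype.prod_equiv (Equiv.neg (ZMod p))
    intro c
    simp [sub_eq_add_neg]
  rw [h1]
  have h2 := congrArg (fun P => Polynomial.eval t (P.map φ)) (aux_prodXsub p)
  simpa [Polynomial.eval_map, Polynomial.eval₂_finset_prod] using h2

lemma aux_field (p : ℕ) [Fact p.Prime] {F : Type*} [Field F] (φ : ZMod p →+* F) (x y : F) :
    ∏ c : ZMod p, (x + φ c * y) = x ^ p - x * y ^ (p - 1) := by
  obtain ⟨n, rfl⟩ : ∃ n, p = n + 1 := ⟨p - 1, by have := (Fact.out : p.Prime).one_lt; omega⟩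
  simp only [Nat.add_sub_cancel]
  by_cases hy : y = 0
  · subst hy
    have hn : n ≠ 0 := by have := (Fact.out : (n+1).Prime).one_lt; omega
    simp [Finset.prod_const, ZMod.card, Finset.card_univ, zero_pow hn]
  · have key := aux_field_t (n+1) φ (x / y)
    have h1 : ∏ c : ZMod (n+1), (x + φ c * y) = ∏ c : ZMod (n+1), (y * (x / y + φ c)) := by
      apply Finset.prod_congr rfl
      intro c _
      field_simp
    rw [h1, Finset.prod_mul_distrib, Finset.prod_const, Finset.card_univ, ZMod.card, key]
    field_simp
    have h3 : y * y⁻¹ = 1 := mul_inv_cancel₀ hy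
    have h4 : y ^ n * y⁻¹ ^ n = 1 := by rw [← mul_pow, h3, one_pow]
    linear_combination (y * x * x ^ n) * h4 + (y * x * x ^ n * y ^ n * y⁻¹ ^ n) * h3

lemma aux_range_univ (p : ℕ) [NeZero p] {M : Type*} [CommMonoid M] (f : ZMod p → M) :
    ∏ j ∈ Finset.range p, f (j : ZMod p) = ∏ c : ZMod p, f c := by
  exact Finset.prod_nbij' (fun j : ℕ => ((j : ZMod p))) (fun c => c.val)
    (fun a _ => Finset.mem_univ _)
    (fun c _ => Finset.mem_range.2 (ZMod.val_lt c))
    (fun a ha => ZMod.val_natCast_of_lt (Finset.mem_range.1 ha))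
    (fun c _ => by simp [ZMod.natCast_val, ZMod.cast_id])
    (fun a _ => rfl)

open MvPolynomial

lemma aux_main (p : ℕ) (hp : p.Prime) (a b : MvPolynomial (Fin 2) (ZMod p)) :
    ∏ j ∈ Finset.range p, (a + C (j : ZMod p) * b) = a ^ p - a * b ^ (p - 1) := by
  haveI := Fact.mk hp
  have : NeZero p := ⟨hp.ne_zero⟩
  rw [aux_range_univ p (fun c => a + C c * b)]
  apply IsFractionRing.injective (MvPolynomial (Fin 2) (ZMod p))
    (FractionRing (MvPolynomial (Fin 2) (ZMod p)))
  rw [map_prod, map_sub, map_pow, map_mul, map_pow]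
  simp only [map_add, map_mul]
  exact aux_field p ((algebraMap (MvPolynomial (Fin 2) (ZMod p))
    (FractionRing (MvPolynomial (Fin 2) (ZMod p)))).comp MvPolynomial.C)
    (algebraMap _ _ a) (algebraMap _ _ b)

lemma aux_frob (p : ℕ) (hp : p.Prime) (c : ZMod p) :
    (1 + C c * X 0 : MvPolynomial (Fin 2) (ZMod p)) ^ p = 1 + C c * X 0 ^ p := by
  haveI := Fact.mk hp
  rw [add_pow_char, mul_pow, one_pow, ← map_pow, ZMod.pow_card]

lemma aux_subfrob (p : ℕ) (hp : p.Prime) :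
    (1 - X 1 ^ (p - 1) : MvPolynomial (Fin 2) (ZMod p)) ^ p = 1 - X 1 ^ (p ^ 2 - p) := by
  haveI := Fact.mk hp
  rw [sub_pow_char, one_pow, ← pow_mul]
  congr 2
  rw [Nat.sub_mul, one_mul, ← pow_two]

/-- Let `p` be an odd prime.  Writing `ξ = X 0`, `η = X 1` in `(ZMod p)[ξ, η]`, with
`q = η^(p²-p) + ξ^(p-1)·(ξ^(p-1) - η^(p-1))^(p-1)` and `r = ξ·η·(ξ^(p-1) - η^(p-1))`,
one has `∏_{i=0}^{p-1} ∏_{j=0}^{p-1} (1 + i·ξ + j·η) = 1 - q + r^(p-1)`. -/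
theorem stmt_1 (p : ℕ) (hp : p.Prime) (hodd : Odd p)
    (q r : MvPolynomial (Fin 2) (ZMod p))
    (hq : q = X 1 ^ (p ^ 2 - p) +
      X 0 ^ (p - 1) * (X 0 ^ (p - 1) - X 1 ^ (p - 1)) ^ (p - 1))
    (hr : r = X 0 * X 1 * (X 0 ^ (p - 1) - X 1 ^ (p - 1))) :
    ∏ i ∈ Finset.range p, ∏ j ∈ Finset.range p,
        (1 + C (i : ZMod p) * X 0 + C (j : ZMod p) * X 1) = 1 - q + r ^ (p - 1) := by
  subst hq hr
  have hin : ∀ i : ℕ, ∏ j ∈ Finset.range p,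
      ((1 : MvPolynomial (Fin 2) (ZMod p)) + C (i : ZMod p) * X 0 + C (j : ZMod p) * X 1)
      = (1 - X 1 ^ (p - 1)) + C (i : ZMod p) * (X 0 ^ p - X 0 * X 1 ^ (p - 1)) := by
    intro i
    rw [aux_main p hp (1 + C (i : ZMod p) * X 0) (X 1), aux_frob p hp]
    ring
  rw [Finset.prod_congr rfl (fun i _ => hin i),
    aux_main p hp (1 - X 1 ^ (p - 1)) (X 0 ^ p - X 0 * X 1 ^ (p - 1)), aux_subfrob p hp]
  have hB : (X 0 ^ p - X 0 * X 1 ^ (p - 1) : MvPolynomial (Fin 2) (ZMod p))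
      = X 0 * (X 0 ^ (p - 1) - X 1 ^ (p - 1)) := by
    rw [mul_sub, ← pow_succ', Nat.sub_add_cancel hp.one_lt.le]
  rw [hB, mul_pow, mul_pow, mul_pow]
  ring
end

section
/- Let p be an odd prime. In the polynomial ring (ZMod p)[t, ξ, η] in three variables one has the identity ∏_{(i,j) ∈ (ZMod p)² \ {(0,0)}} (t + i·ξ + j·η) = t^(p²−1) − q·t^(p−1) + r^(p−1), where q and r are regarded as polynomials in ξ and η. -/
open MvPolynomial

open Finset

lemma poly_base (p : ℕ) [Fact p.Prime] :
    ∏ a : ZMod p, (Polynomial.X - Polynomial.C a) = (Polynomial.X : Polynomial (ZMod p)) ^ p - Polynomial.X := by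
  have hp : p.Prime := Fact.out
  have h1 : 1 < p := hp.one_lt
  have hcard : Fintype.card (ZMod p) = p := ZMod.card p
  have hmonic : ((Polynomial.X : Polynomial (ZMod p)) ^ p - Polynomial.X).Monic := by
    apply Polynomial.monic_X_pow_sub
    simpa using h1
  have hroots := FiniteField.roots_X_pow_card_sub_X (ZMod p)
  rw [hcard] at hroots
  have hdeg := FiniteField.X_pow_card_sub_X_natDegree_eq (ZMod p) h1
  have hcardroots : ((Polynomial.X : Polynomial (ZMod p)) ^ p - Polynomial.X).roots.card
      = ((Polynomial.X : Polynomial (ZMod p)) ^ p - Polynomial.X).natDegree := by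
    rw [hroots, hdeg]; simp [hcard]
  have h := Polynomial.prod_multiset_X_sub_C_of_monic_of_roots_card_eq hmonic hcardroots
  rw [hroots] at h
  rw [← h]
  rw [Finset.prod_eq_multiset_prod]

section scalar
variable {K : Type*} [Field K] (p : ℕ) [Fact p.Prime] (ψ : ZMod p →+* K)

lemma scalar_base (w : K) : ∏ a : ZMod p, (w - ψ a) = w ^ p - w := by
  have h := congrArg (Polynomial.eval₂RingHom ψ w) (poly_base p)
  simp only [map_prod, map_sub, map_pow, Polynomial.coe_eval₂RingHom, Polynomial.eval₂_X, Polynomial.eval₂_C] at h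
  exact h

lemma scalar_base' (w : K) : ∏ a : ZMod p, (w + ψ a) = w ^ p - w := by
  rw [← scalar_base p ψ w]
  exact Fintype.prod_equiv (Equiv.neg (ZMod p)) _ _ (fun a => by simp)

lemma prod_linear (z A : K) :
    ∏ a : ZMod p, (z + ψ a * A) = z ^ p - A ^ (p - 1) * z := by
  have hp : p.Prime := Fact.out
  have h1 : 1 < p := hp.one_lt
  rcases eq_or_ne A 0 with h | h
  · subst h
    simp only [mul_zero, add_zero, Finset.prod_const, Finset.card_univ, ZMod.card]
    rw [zero_pow (by omega : p - 1 ≠ 0)]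
    ring
  · have h2 := scalar_base' p ψ (z / A)
    calc ∏ a : ZMod p, (z + ψ a * A) = ∏ a : ZMod p, (A * (z / A + ψ a)) := by
          refine Finset.prod_congr rfl fun a _ => ?_
          field_simp
      _ = A ^ p * ((z / A) ^ p - z / A) := by
          rw [Finset.prod_mul_distrib, Finset.prod_const, Finset.card_univ, ZMod.card, h2]
      _ = z ^ p - A ^ (p - 1) * z := by
          have hA : A ^ p = A ^ (p - 1) * A := by
            rw [← pow_succ]
            congr 1
            omega
          rw [div_pow, mul_sub, mul_div_cancel₀ _ (pow_ne_zero p h), hA]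
          field_simp

end scalar

lemma final_alg {K : Type*} [CommRing K] (p k : ℕ) [Fact p.Prime] [CharP K p]
    (hk : p = k + 1) (hke : Even k) (T A B : K) :
    (T * (T ^ k - A ^ k)) ^ p - (B * (B ^ k - A ^ k)) ^ k * (T * (T ^ k - A ^ k)) =
    T * (T ^ (p ^ 2 - 1) - (B ^ (p ^ 2 - p) + A ^ k * (A ^ k - B ^ k) ^ k) * T ^ k
      + (A * B * (A ^ k - B ^ k)) ^ k) := by
  subst hk
  have e1 : (k + 1) ^ 2 - 1 = (k + 1) * k + k := by
    have : (k + 1) ^ 2 = (k + 1) * k + k + 1 := by ring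
    omega
  have e2 : (k + 1) ^ 2 - (k + 1) = (k + 1) * k := by
    have : (k + 1) ^ 2 = (k + 1) * k + (k + 1) := by ring
    omega
  rw [e1, e2]
  have h1 : (T ^ k - A ^ k) ^ (k + 1) = (T ^ k) ^ (k + 1) - (A ^ k) ^ (k + 1) :=
    sub_pow_char _ _
  have h2 : (A ^ k - B ^ k) ^ (k + 1) = (A ^ k) ^ (k + 1) - (B ^ k) ^ (k + 1) :=
    sub_pow_char _ _
  have h3 : (B ^ k - A ^ k) ^ k = (A ^ k - B ^ k) ^ k := by
    rw [← neg_sub]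
    exact hke.neg_pow _
  rw [mul_pow, h1, mul_pow, h3, mul_pow, mul_pow]
  linear_combination (T ^ (k + 1)) * h2

/-- Let `p` be an odd prime.  In `(ZMod p)[t, ξ, η]` (with `t = X 0`, `ξ = X 1`,
`η = X 2`), setting `q = η^(p²-p) + ξ^(p-1)·(ξ^(p-1) - η^(p-1))^(p-1)` and
`r = ξ·η·(ξ^(p-1) - η^(p-1))`, one has
`∏_{(i,j) ∈ (ZMod p)² \ {(0,0)}} (t + i·ξ + j·η) = t^(p²-1) - q·t^(p-1) + r^(p-1)`. -/
theorem stmt_2 (p : ℕ) [Fact p.Prime] (hodd : Odd p)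
    (q r : MvPolynomial (Fin 3) (ZMod p))
    (hq : q = X 2 ^ (p ^ 2 - p) +
      X 1 ^ (p - 1) * (X 1 ^ (p - 1) - X 2 ^ (p - 1)) ^ (p - 1))
    (hr : r = X 1 * X 2 * (X 1 ^ (p - 1) - X 2 ^ (p - 1))) :
    ∏ ij ∈ (Finset.univ : Finset (ZMod p × ZMod p)) \ {(0, 0)},
        (X 0 + C ij.1 * X 1 + C ij.2 * X 2) =
      X 0 ^ (p ^ 2 - 1) - q * X 0 ^ (p - 1) + r ^ (p - 1) := by
  subst hq hr
  have hp : p.Prime := Fact.out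
  have h1 : 1 < p := hp.one_lt
  obtain ⟨k, hk⟩ : ∃ k, p = k + 1 := ⟨p - 1, by omega⟩
  have hke : Even k := by
    rcases hodd with ⟨m, hm⟩; exact ⟨m, by omega⟩
  have ek : p - 1 = k := by omega
  set K := FractionRing (MvPolynomial (Fin 3) (ZMod p)) with hK
  have hinj : Function.Injective (algebraMap (MvPolynomial (Fin 3) (ZMod p)) K) :=
    IsFractionRing.injective _ _
  haveI : CharP K p := charP_of_injective_ringHom hinj p
  apply hinj
  set φ := algebraMap (MvPolynomial (Fin 3) (ZMod p)) K with hφ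
  set ψ : ZMod p →+* K := φ.comp (MvPolynomial.C) with hψ
  set T := φ (X 0) with hT
  set A := φ (X 1) with hA
  set B := φ (X 2) with hB
  have hmap : ∀ (a : ZMod p), φ (MvPolynomial.C a) = ψ a := fun a => rfl
  simp only [map_prod, map_add, map_mul, map_sub, map_pow, hmap]
  -- goal now in K
  have hT0 : T ≠ 0 := by
    rw [hT, hφ]
    exact (map_ne_zero_iff _ hinj).mpr (MvPolynomial.X_ne_zero 0)
  apply mul_left_cancel₀ hT0
  have hL : T * (∏ ij ∈ (Finset.univ : Finset (ZMod p × ZMod p)) \ {(0, 0)},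
        (T + ψ ij.1 * A + ψ ij.2 * B)) =
      ∏ ij : ZMod p × ZMod p, (T + ψ ij.1 * A + ψ ij.2 * B) := by
    rw [Finset.sdiff_singleton_eq_erase,
      ← Finset.mul_prod_erase Finset.univ _ (Finset.mem_univ ((0 : ZMod p), (0 : ZMod p)))]
    simp
  rw [hL, Fintype.prod_prod_type, Finset.prod_comm]
  have inner : ∀ j : ZMod p, ∏ i : ZMod p, (T + ψ i * A + ψ j * B) =
      (T ^ p - A ^ (p - 1) * T) + ψ j * (B ^ p - A ^ (p - 1) * B) := by
    intro j
    have e : ∏ i : ZMod p, (T + ψ i * A + ψ j * B) =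
        ∏ i : ZMod p, ((T + ψ j * B) + ψ i * A) :=
      Finset.prod_congr rfl fun i _ => by ring
    rw [e, prod_linear p ψ (T + ψ j * B) A]
    have hψp : (ψ j) ^ p = ψ j := by rw [← map_pow, ZMod.pow_card]
    rw [add_pow_char, mul_pow, hψp]
    ring
  rw [Finset.prod_congr rfl fun j _ => inner j,
    prod_linear p ψ (T ^ p - A ^ (p - 1) * T) (B ^ p - A ^ (p - 1) * B)]
  rw [ek]
  have hpow : ∀ x : K, x ^ p = x ^ (k + 1) := fun x => congrArg (x ^ ·) hk
  rw [show T ^ p - A ^ k * T = T * (T ^ k - A ^ k) from by rw [hpow T]; ring,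
    show B ^ p - A ^ k * B = B * (B ^ k - A ^ k) from by rw [hpow B]; ring]
  exact final_alg p k hk hke T A B
end

section
/- Let p be an odd prime. In (ZMod p)[ξ, η] one has ξ^(p²−1) − q·ξ^(p−1) + r^(p−1) = 0 and η^(p²−1) − q·η^(p−1) + r^(p−1) = 0. -/
open MvPolynomial

/-- Let `p` be an odd prime.  Writing `ξ = X 0`, `η = X 1` in `(ZMod p)[ξ, η]`, with
`q = η^(p²-p) + ξ^(p-1)·(ξ^(p-1) - η^(p-1))^(p-1)` and `r = ξ·η·(ξ^(p-1) - η^(p-1))`,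
one has `ξ^(p²-1) - q·ξ^(p-1) + r^(p-1) = 0` and `η^(p²-1) - q·η^(p-1) + r^(p-1) = 0`. -/
theorem stmt_5 (p : ℕ) (hp : p.Prime) (hodd : Odd p)
    (q r : MvPolynomial (Fin 2) (ZMod p))
    (hq : q = X 1 ^ (p ^ 2 - p) +
      X 0 ^ (p - 1) * (X 0 ^ (p - 1) - X 1 ^ (p - 1)) ^ (p - 1))
    (hr : r = X 0 * X 1 * (X 0 ^ (p - 1) - X 1 ^ (p - 1))) :
    X 0 ^ (p ^ 2 - 1) - q * X 0 ^ (p - 1) + r ^ (p - 1) = 0 ∧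
    X 1 ^ (p ^ 2 - 1) - q * X 1 ^ (p - 1) + r ^ (p - 1) = 0 := by
  have hp1 : 1 ≤ p := hp.one_lt.le
  haveI : Fact p.Prime := ⟨hp⟩
  set a : MvPolynomial (Fin 2) (ZMod p) := X 0 ^ (p - 1) with ha
  set b : MvPolynomial (Fin 2) (ZMod p) := X 1 ^ (p - 1) with hb
  obtain ⟨n, hn⟩ := Nat.exists_eq_succ_of_ne_zero hp.ne_zero
  have h1 : p ^ 2 - 1 = (p - 1) * (p + 1) := by
    subst hn
    simp only [Nat.succ_eq_add_one]
    rw [Nat.add_sub_cancel, show (n + 1) ^ 2 = n * (n + 1 + 1) + 1 by ring,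
      Nat.add_sub_cancel]
  have h2 : p ^ 2 - p = (p - 1) * p := by
    subst hn
    simp only [Nat.succ_eq_add_one]
    rw [Nat.add_sub_cancel, show (n + 1) ^ 2 = n * (n + 1) + (n + 1) by ring,
      Nat.add_sub_cancel]
  have hXa : X (0 : Fin 2) ^ (p ^ 2 - 1) = a ^ (p + 1) := by rw [h1, pow_mul]
  have hXb : X (1 : Fin 2) ^ (p ^ 2 - 1) = b ^ (p + 1) := by rw [h1, pow_mul]
  have hXbp : X (1 : Fin 2) ^ (p ^ 2 - p) = b ^ p := by rw [h2, pow_mul]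
  have hrp : r ^ (p - 1) = a * b * (a - b) ^ (p - 1) := by
    rw [hr, mul_pow, mul_pow]
  have hch : (a - b) ^ p = a ^ p - b ^ p := sub_pow_char a b
  have key : (a - b) ^ (p - 1) * (a - b) = a ^ p - b ^ p := by
    rw [← pow_succ, Nat.sub_add_cancel hp1, hch]
  constructor
  · rw [hq, hXa, hXbp, hrp]
    linear_combination -(a * key)
  · rw [hq, hXb, hXbp, hrp]
    ring
end

section
/- Let p be an odd prime. The quotient of (ZMod p)[ξ, η] by the ideal generated by q and r is a (ZMod p)-vector space of dimension p·(p² − 1). -/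
section AuxStmt6
open Polynomial Ideal
noncomputable section
variable {k : Type*} [Field k]

lemma finrank_quot_span (h : Polynomial k) (hh : h ≠ 0) :
    FiniteDimensional k (Polynomial k ⧸ Ideal.span {h}) ∧
      Module.finrank k (Polynomial k ⧸ Ideal.span {h}) = h.natDegree := by
  constructor
  · exact Module.Finite.of_basis (AdjoinRoot.powerBasis hh).basis
  · have := (AdjoinRoot.powerBasis hh).finrank
    simp only [AdjoinRoot.powerBasis_dim] at this
    exact this

lemma base_general {A : Type*} [CommRing A] [Algebra k A] (φ : A →ₐ[k] Polynomial k)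
    (hs : Function.Surjective φ) (Q f : A) (hker : RingHom.ker φ = Ideal.span {f})
    (hQ : φ Q ≠ 0) :
    FiniteDimensional k (A ⧸ Ideal.span {Q, f}) ∧
      Module.finrank k (A ⧸ Ideal.span {Q, f}) = (φ Q).natDegree := by
  set ψ : A →ₐ[k] Polynomial k ⧸ Ideal.span {φ Q} :=
    (Ideal.Quotient.mkₐ k (Ideal.span {φ Q})).comp φ with hψ
  have hψs : Function.Surjective ψ := (Ideal.Quotient.mkₐ_surjective k _).comp hs
  have hmap : Ideal.span {φ Q} = Ideal.map φ (Ideal.span {Q}) := by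
    rw [Ideal.map_span, Set.image_singleton]
  have hkerψ : RingHom.ker ψ = Ideal.span {Q, f} := by
    have h1 : RingHom.ker ψ = Ideal.comap φ (Ideal.span {φ Q}) := by
      ext x
      simp [hψ, RingHom.mem_ker, Ideal.Quotient.eq_zero_iff_mem]
    rw [h1, hmap, Ideal.comap_map_of_surjective _ hs, ← RingHom.ker_eq_comap_bot, hker,
      Ideal.span_insert]
  have e : (A ⧸ Ideal.span {Q, f}) ≃ₐ[k] (Polynomial k ⧸ Ideal.span {φ Q}) :=
    (Ideal.quotientEquivAlgOfEq k hkerψ.symm).trans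
      (Ideal.quotientKerAlgEquivOfSurjective hψs)
  obtain ⟨h1, h2⟩ := finrank_quot_span (φ Q) hQ
  refine ⟨Module.Finite.equiv e.symm.toLinearEquiv, ?_⟩
  rw [e.toLinearEquiv.finrank_eq, h2]

lemma nzd' {A : Type*} [CommRing A] [IsDomain A] {Q f : A} (hf : Prime f) (hndvd : ¬ f ∣ Q) :
    ∀ x, f * x ∈ Ideal.span {Q} → x ∈ Ideal.span {Q} := by
  intro x hx
  rw [Ideal.mem_span_singleton] at hx ⊢
  obtain ⟨t, ht⟩ := hx
  have hfQt : f ∣ Q * t := ⟨x, ht.symm⟩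
  rcases hf.dvd_or_dvd hfQt with h | h
  · exact absurd h hndvd
  · obtain ⟨t', rfl⟩ := h
    refine ⟨t', mul_left_cancel₀ hf.ne_zero ?_⟩
    rw [ht]; ring


lemma step' {A : Type*} [CommRing A] [Algebra k A] (Q f w : A)
    (hf : ∀ x, f * x ∈ Ideal.span {Q} → x ∈ Ideal.span {Q})
    (h1 : FiniteDimensional k (A ⧸ Ideal.span {Q, f}))
    (h2 : FiniteDimensional k (A ⧸ Ideal.span {Q, w})) :
    FiniteDimensional k (A ⧸ Ideal.span {Q, f * w}) ∧
      Module.finrank k (A ⧸ Ideal.span {Q, f * w}) =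
        Module.finrank k (A ⧸ Ideal.span {Q, f}) +
          Module.finrank k (A ⧸ Ideal.span {Q, w}) := by
  set I : Ideal A := Ideal.span {Q, w} with hI
  set J : Ideal A := Ideal.span {Q, f * w} with hJ
  set K : Ideal A := Ideal.span {Q, f} with hK
  -- the multiplication-by-f map
  set α : A →ₗ[A] A ⧸ J := (Submodule.mkQ (J : Submodule A A)).comp (LinearMap.lsmul A A f)
    with hα
  have hαval : ∀ t : A, α t = Ideal.Quotient.mk J (f * t) := fun t => rfl
  have hαker : LinearMap.ker α = (I : Submodule A A) := by
    ext x
    constructor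
    · intro hx
      have : f * x ∈ J := by
        have := hx
        simp only [LinearMap.mem_ker] at this
        rw [hαval] at this
        exact (Submodule.Quotient.mk_eq_zero _).mp this
      rw [hJ, Ideal.mem_span_pair] at this
      obtain ⟨a, b, hab⟩ := this
      have hx' : f * (x - b * w) ∈ Ideal.span {Q} := by
        rw [Ideal.mem_span_singleton']
        exact ⟨a, by ring_nf; ring_nf at hab ⊢; linear_combination hab⟩
      have := hf _ hx'
      rw [Ideal.mem_span_singleton'] at this
      obtain ⟨c, hc⟩ := this
      show x ∈ I
      rw [hI, Ideal.mem_span_pair]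
      exact ⟨c, b, by linear_combination hc⟩
    · intro hx
      rw [hI] at hx
      rw [Ideal.mem_span_pair] at hx
      obtain ⟨a, b, hab⟩ := hx
      simp only [LinearMap.mem_ker]
      rw [hαval]
      rw [Ideal.Quotient.eq_zero_iff_mem, hJ, Ideal.mem_span_pair]
      exact ⟨f * a, b, by linear_combination f * hab⟩
  have hle : (I : Submodule A A) ≤ LinearMap.ker α := le_of_eq hαker.symm
  set μ : (A ⧸ I) →ₗ[A] (A ⧸ J) := Submodule.liftQ (I : Submodule A A) α hle with hμ
  have hμinj : Function.Injective μ := by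
    rw [← LinearMap.ker_eq_bot, hμ, Submodule.ker_liftQ_eq_bot _ _ _ (le_of_eq hαker)]
  set μk : (A ⧸ I) →ₗ[k] (A ⧸ J) := μ.restrictScalars k with hμk
  set N : Submodule k (A ⧸ J) := LinearMap.range μk with hN
  have e1 : (A ⧸ I) ≃ₗ[k] N := LinearEquiv.ofInjective μk hμinj
  set N' : Ideal (A ⧸ J) := Ideal.map (Ideal.Quotient.mk J) (Ideal.span {f}) with hN'
  have hNN' : N = Submodule.restrictScalars k (N' : Submodule (A ⧸ J) (A ⧸ J)) := by
    ext z
    constructor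
    · rintro ⟨y, rfl⟩
      obtain ⟨t, rfl⟩ := Ideal.Quotient.mk_surjective (I := I) y
      have : μk (Ideal.Quotient.mk I t) = Ideal.Quotient.mk J (f * t) := rfl
      rw [this]
      exact Ideal.mem_map_of_mem _ (Ideal.mem_span_singleton'.mpr ⟨t, mul_comm t f⟩)
    · intro hz
      have hz' : (z : A ⧸ J) ∈ N' := hz
      rw [hN', Ideal.mem_map_iff_of_surjective _ Ideal.Quotient.mk_surjective] at hz'
      obtain ⟨x, hx, rfl⟩ := hz'
      rw [Ideal.mem_span_singleton'] at hx
      obtain ⟨t, rfl⟩ := hx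
      exact ⟨Ideal.Quotient.mk I t, by show α t = _; rw [hαval, mul_comm]⟩
  -- quotient of A⧸J by N' is A⧸K
  have hsup : J ⊔ Ideal.span {f} = K := by
    apply le_antisymm
    · refine sup_le (Ideal.span_le.mpr ?_) (Ideal.span_le.mpr ?_)
      · rintro x hx
        rcases hx with h | h
        · exact Ideal.subset_span (by left; exact h)
        · simp only [Set.mem_singleton_iff] at h
          subst h
          exact Ideal.mul_mem_right w _ (Ideal.subset_span (by right; rfl))
      · rintro x hx
        simp only [Set.mem_singleton_iff] at hx
        subst hx
        exact Ideal.subset_span (by right; rfl)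
    · refine Ideal.span_le.mpr ?_
      rintro x hx
      rcases hx with h | h
      · exact le_sup_left (α := Ideal A) (Ideal.subset_span (by left; exact h))
      · simp only [Set.mem_singleton_iff] at h
        subst h
        exact le_sup_right (α := Ideal A) (Ideal.subset_span rfl)
  have hmkₐ : Ideal.map (Ideal.Quotient.mkₐ k J) (Ideal.span {f}) = N' := rfl
  have e2 : ((A ⧸ J) ⧸ N') ≃ₐ[k] (A ⧸ K) :=
    ((Ideal.quotientEquivAlgOfEq k hmkₐ.symm).trans
      (DoubleQuot.quotQuotEquivQuotSupₐ k J (Ideal.span {f}))).trans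
      (Ideal.quotientEquivAlgOfEq k hsup)
  have e3 : ((A ⧸ J) ⧸ N) ≃ₗ[k] (A ⧸ K) := by
    rw [hNN']
    exact (Submodule.Quotient.restrictScalarsEquiv k
      (N' : Submodule (A ⧸ J) (A ⧸ J))).trans e2.toLinearEquiv
  -- finite dimensionality
  have hNfd : FiniteDimensional k N := Module.Finite.equiv e1
  have hQfd : FiniteDimensional k ((A ⧸ J) ⧸ N) := Module.Finite.equiv e3.symm
  have hfd : FiniteDimensional k (A ⧸ J) := by
    rw [show FiniteDimensional k (A ⧸ J) = Module.Finite k (A ⧸ J) from rfl]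
    rw [Module.finite_def]
    apply Submodule.fg_of_fg_map_of_fg_inf_ker N.mkQ
    · rw [Submodule.map_top, Submodule.range_mkQ]
      exact Module.finite_def.mp hQfd
    · rw [Submodule.ker_mkQ, top_inf_eq]
      exact (Submodule.fg_top N).mp (Module.finite_def.mp hNfd)
  refine ⟨hfd, ?_⟩
  have hadd := Submodule.finrank_quotient_add_finrank N
  rw [e3.finrank_eq, e1.symm.finrank_eq] at hadd
  omega

lemma multi' {A : Type*} [CommRing A] [Algebra k A] (Q : A) (D : ℕ) (L : List A)
    (hL : ∀ f ∈ L, (∀ x, f * x ∈ Ideal.span {Q} → x ∈ Ideal.span {Q}) ∧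
      FiniteDimensional k (A ⧸ Ideal.span {Q, f}) ∧
      Module.finrank k (A ⧸ Ideal.span {Q, f}) = D) :
    FiniteDimensional k (A ⧸ Ideal.span {Q, L.prod}) ∧
      Module.finrank k (A ⧸ Ideal.span {Q, L.prod}) = L.length * D := by
  induction L with
  | nil =>
    have htop : Ideal.span ({Q, (1 : A)} : Set A) = ⊤ := by
      rw [Ideal.eq_top_iff_one, Ideal.mem_span_pair]
      exact ⟨0, 1, by ring⟩
    rw [List.prod_nil, htop]
    haveI : Subsingleton (A ⧸ (⊤ : Ideal A)) := Ideal.Quotient.subsingleton_iff.mpr rfl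
    exact ⟨inferInstance, by simp [Module.finrank_zero_of_subsingleton]⟩
  | cons f L ih =>
    obtain ⟨hnzd, hfd, hfr⟩ := hL f List.mem_cons_self
    obtain ⟨ihfd, ihfr⟩ := ih (fun g hg => hL g (List.mem_cons_of_mem f hg))
    rw [List.prod_cons]
    obtain ⟨sfd, sfr⟩ := step' Q f L.prod hnzd hfd ihfd
    exact ⟨sfd, by rw [sfr, hfr, ihfr, List.length_cons]; ring⟩

lemma P0' (p : ℕ) [Fact p.Prime] :
    ∏ a ∈ Finset.univ.erase (0 : ZMod p), (X - C a) = X ^ (p - 1) - 1 := by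
  have hp := (Fact.out : p.Prime)
  have hp1 : 1 < p := hp.one_lt
  have hcard : Fintype.card (ZMod p) = p := ZMod.card p
  have hroots := FiniteField.roots_X_pow_card_sub_X (ZMod p)
  rw [hcard] at hroots
  have huniv : ∏ a : ZMod p, (X - C a) = X ^ p - X := by
    have hmonic : (X ^ p - X : (ZMod p)[X]).Monic := by
      apply monic_X_pow_sub
      rw [degree_X]
      exact_mod_cast hp1
    have hdeg := FiniteField.X_pow_card_sub_X_natDegree_eq (ZMod p) hp1
    have := prod_multiset_X_sub_C_of_monic_of_roots_card_eq hmonic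
      (by rw [hroots, hdeg]; simp [hcard])
    rw [hroots] at this
    rw [← this, Finset.prod_eq_multiset_prod]
  have hsplit : (X - C (0 : ZMod p)) * ∏ a ∈ Finset.univ.erase (0 : ZMod p), (X - C a)
      = X ^ p - X := by
    rw [← huniv]
    exact Finset.mul_prod_erase (Finset.univ : Finset (ZMod p)) (fun a => X - C a) (Finset.mem_univ 0)
  have hX : (X : (ZMod p)[X]) * (X ^ (p - 1) - 1) = X ^ p - X := by
    rw [mul_sub, mul_one, ← pow_succ']
    congr 2
    omega
  have hXne : (X : (ZMod p)[X]) ≠ 0 := X_ne_zero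
  apply mul_left_cancel₀ hXne
  rw [hX, ← hsplit, map_zero, sub_zero]

lemma card_erase (p : ℕ) [Fact p.Prime] :
    (Finset.univ.erase (0 : ZMod p)).card = p - 1 := by
  rw [Finset.card_erase_of_mem (Finset.mem_univ 0), Finset.card_univ, ZMod.card]

lemma prodid' (p : ℕ) [Fact p.Prime] :
    ∏ a ∈ Finset.univ.erase (0 : ZMod p),
        ((X : (Polynomial (ZMod p))[X]) - C (C a * X)) =
      X ^ (p - 1) - C ((X : Polynomial (ZMod p)) ^ (p - 1)) := by
  set A := Polynomial (ZMod p)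
  set K := FractionRing A
  set i : A →+* K := algebraMap A K with hi
  have hinj : Function.Injective i := IsFractionRing.injective A K
  set y : K := i (X : A) with hy
  have hyne : y ≠ 0 := by
    rw [hy, ← map_zero i]
    exact fun h => X_ne_zero (hinj h)
  -- map the base identity into K[X]
  set g : ZMod p →+* K := i.comp (C : ZMod p →+* A) with hg
  set θ : (ZMod p)[X] →+* K[X] :=
    eval₂RingHom ((C : K →+* K[X]).comp g) (C y⁻¹ * X) with hθ
  have hθX : θ X = C y⁻¹ * X := eval₂_X _ _
  have hθC : ∀ a : ZMod p, θ (C a) = C (g a) := fun a => eval₂_C _ _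
  have base := congrArg θ (P0' p)
  rw [map_prod, map_sub, map_pow, map_one, hθX] at base
  simp only [map_sub, hθX, hθC] at base
  -- multiply both sides by (C y)^(p-1)
  have hmul := congrArg (fun z => (C y : K[X]) ^ (p - 1) * z) base
  have hcard := card_erase p
  have hL : (C y : K[X]) ^ (p - 1) * ∏ a ∈ Finset.univ.erase (0 : ZMod p),
      (C y⁻¹ * X - C (g a)) = ∏ a ∈ Finset.univ.erase (0 : ZMod p), (X - C (g a * y)) := by
    rw [← hcard, ← Finset.prod_const, ← Finset.prod_mul_distrib]
    apply Finset.prod_congr rfl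
    intro a _
    rw [mul_sub, ← mul_assoc, ← C_mul, mul_inv_cancel₀ hyne, C_1, one_mul, ← C_mul,
      mul_comm y (g a)]
  have hR : (C y : K[X]) ^ (p - 1) * ((C y⁻¹ * X) ^ (p - 1) - 1) =
      X ^ (p - 1) - C (y ^ (p - 1)) := by
    rw [mul_sub, mul_one, mul_pow, ← mul_assoc, ← mul_pow, ← C_mul,
      mul_inv_cancel₀ hyne, C_1, one_pow, one_mul, ← C_pow]
  rw [hL, hR] at hmul
  -- now pull back along the injective map A[X] → K[X]
  apply Polynomial.map_injective i hinj
  rw [Polynomial.map_prod]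
  simp only [Polynomial.map_sub, Polynomial.map_pow, Polynomial.map_X, Polynomial.map_C]
  rw [_root_.map_pow, ← hmul]
  apply Finset.prod_congr rfl
  intro a _
  rw [_root_.map_mul]
  rfl

lemma base_eval' (Q : (Polynomial k)[X]) (c : Polynomial k) (hc : Q.eval c ≠ 0) :
    FiniteDimensional k ((Polynomial k)[X] ⧸ Ideal.span {Q, X - C c}) ∧
      Module.finrank k ((Polynomial k)[X] ⧸ Ideal.span {Q, X - C c}) =
        (Q.eval c).natDegree := by
  set φ : (Polynomial k)[X] →ₐ[k] Polynomial k :=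
    (Polynomial.aeval c : (Polynomial k)[X] →ₐ[Polynomial k] Polynomial k).restrictScalars k
    with hφ
  have hφval : ∀ t, φ t = Polynomial.eval c t := by
    intro t
    show (Polynomial.aeval c) t = _
    rw [coe_aeval_eq_eval]
  have hs : Function.Surjective φ := fun s => ⟨C s, by rw [hφval, eval_C]⟩
  have hker : RingHom.ker φ = Ideal.span {X - C c} := by
    rw [← Polynomial.ker_evalRingHom]
    ext x
    simp only [RingHom.mem_ker, hφval, coe_evalRingHom]
  obtain ⟨h1, h2⟩ := base_general φ hs Q (X - C c) hker (by rwa [hφval])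
  exact ⟨h1, by rwa [hφval] at h2⟩

lemma base_map' (Q : (Polynomial k)[X]) (hQ : Q.map (evalRingHom (0:k)) ≠ 0) :
    FiniteDimensional k ((Polynomial k)[X] ⧸ Ideal.span {Q, C (X : Polynomial k)}) ∧
      Module.finrank k ((Polynomial k)[X] ⧸ Ideal.span {Q, C (X : Polynomial k)}) =
        (Q.map (evalRingHom (0:k))).natDegree := by
  set ev : Polynomial k →ₐ[k] k := Polynomial.aeval (0:k) with hev
  set φ : (Polynomial k)[X] →ₐ[k] Polynomial k := Polynomial.mapAlgHom ev with hφ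
  have hφval : ∀ t, φ t = t.map (evalRingHom (0:k)) := by
    intro t
    show Polynomial.map ev.toRingHom t = _
    congr 1
  have hs : Function.Surjective φ := by
    intro s
    refine ⟨s.map (C : k →+* Polynomial k), ?_⟩
    rw [hφval, Polynomial.map_map]
    have hcomp : (evalRingHom (0:k)).comp (C : k →+* Polynomial k) = RingHom.id k := by
      ext x
      simp [coe_evalRingHom]
    rw [hcomp, Polynomial.map_id]
  have hker : RingHom.ker φ = Ideal.span {C (X : Polynomial k)} := by
    have h1 : RingHom.ker φ = RingHom.ker (mapRingHom (evalRingHom (0:k))) := by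
      ext x
      simp only [RingHom.mem_ker, hφval, coe_mapRingHom]
    rw [h1, Polynomial.ker_mapRingHom]
    have h2 : RingHom.ker (evalRingHom (0:k)) = Ideal.span {(X : Polynomial k)} := by
      rw [Polynomial.ker_evalRingHom, map_zero, sub_zero]
    rw [h2, Ideal.map_span, Set.image_singleton]
  obtain ⟨h1, h2⟩ := base_general φ hs Q (C X) hker (by rwa [hφval])
  exact ⟨h1, by rwa [hφval] at h2⟩

section MainAux
variable (p : ℕ) [Fact p.Prime]

lemma evalQ'' (c : Polynomial (ZMod p)) (hc : c = 0 ∨ ∃ a : ZMod p, a ≠ 0 ∧ c = C a * X) :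
    ((C (X : Polynomial (ZMod p)) ^ (p^2 - p) +
      X ^ (p-1) * (X ^ (p-1) - C (X : Polynomial (ZMod p)) ^ (p-1)) ^ (p-1)).eval c)
      = (X : Polynomial (ZMod p)) ^ (p^2 - p) := by
  have hm : p - 1 ≠ 0 := by have := (Fact.out : p.Prime).two_le; omega
  have hcm : c ^ (p - 1) = 0 ∨ c ^ (p-1) = (X : Polynomial (ZMod p)) ^ (p-1) := by
    rcases hc with rfl | ⟨a, ha, rfl⟩
    · left; exact zero_pow hm
    · right
      rw [mul_pow, ← C_pow, ZMod.pow_card_sub_one_eq_one ha, C_1, one_mul]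
  simp only [eval_add, eval_mul, eval_pow, eval_sub, eval_C, eval_X]
  rcases hcm with h | h
  · rw [h, zero_mul, add_zero]
  · rw [h, sub_self, zero_pow hm, mul_zero, add_zero]

lemma mapQ'' :
    ((C (X : Polynomial (ZMod p)) ^ (p^2 - p) +
      X ^ (p-1) * (X ^ (p-1) - C (X : Polynomial (ZMod p)) ^ (p-1)) ^ (p-1)).map
        (evalRingHom (0 : ZMod p)))
      = (X : Polynomial (ZMod p)) ^ (p^2 - p) := by
  have h2 := (Fact.out : p.Prime).two_le
  have hm : p - 1 ≠ 0 := by omega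
  have hD : p^2 - p ≠ 0 := by
    have : p < p^2 := by nlinarith
    omega
  have hexp : (p-1) + (p-1)*(p-1) = p^2 - p := by
    obtain ⟨m, rfl⟩ : ∃ m, p = m + 2 := ⟨p - 2, by omega⟩
    have hh : (m+2)^2 = m*m + 4*m + 4 := by ring
    have h4 : (m+1)*(m+1) = m*m + 2*m + 1 := by ring
    have h5 : m + 2 - 1 = m + 1 := rfl
    rw [h5]
    omega
  have hev : (evalRingHom (0 : ZMod p)) (X : Polynomial (ZMod p)) = 0 := by
    simp [coe_evalRingHom]
  simp only [Polynomial.map_add, Polynomial.map_mul, Polynomial.map_pow, Polynomial.map_sub,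
    map_C, hev, Polynomial.map_X, map_zero]
  rw [zero_pow hD, zero_add, zero_pow hm, sub_zero, ← pow_mul, ← pow_add, hexp]

end MainAux
end
end AuxStmt6

open MvPolynomial

/-- Let `p` be an odd prime.  The quotient of `(ZMod p)[ξ, η]` by the ideal generated by
`q` and `r` has dimension `p·(p² - 1)` as a `(ZMod p)`-vector space. -/
theorem stmt_6 (p : ℕ) (hp : p.Prime) (hodd : Odd p)
    (q r : MvPolynomial (Fin 2) (ZMod p))
    (hq : q = X 1 ^ (p ^ 2 - p) +
      X 0 ^ (p - 1) * (X 0 ^ (p - 1) - X 1 ^ (p - 1)) ^ (p - 1))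
    (hr : r = X 0 * X 1 * (X 0 ^ (p - 1) - X 1 ^ (p - 1))) :
    Module.finrank (ZMod p)
        (MvPolynomial (Fin 2) (ZMod p) ⧸ Ideal.span {q, r}) = p * (p ^ 2 - 1) := by
  haveI : Fact p.Prime := ⟨hp⟩
  have h2 : 2 ≤ p := hp.two_le
  -- the algebra equivalence to (k[Y])[X]
  set ι : MvPolynomial (Fin 1) (ZMod p) ≃ₐ[ZMod p] Polynomial (ZMod p) :=
    (MvPolynomial.finSuccEquiv (ZMod p) 0).trans
      (Polynomial.mapAlgEquiv (MvPolynomial.isEmptyAlgEquiv (ZMod p) (Fin 0))) with hι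
  set E : MvPolynomial (Fin 2) (ZMod p) ≃ₐ[ZMod p] Polynomial (Polynomial (ZMod p)) :=
    (MvPolynomial.finSuccEquiv (ZMod p) 1).trans (Polynomial.mapAlgEquiv ι) with hE
  have hE0 : E (MvPolynomial.X 0) = (Polynomial.X : Polynomial (Polynomial (ZMod p))) := by
    rw [hE]
    simp [MvPolynomial.finSuccEquiv_X_zero]
  have hE1 : E (MvPolynomial.X 1) = Polynomial.C (Polynomial.X : Polynomial (ZMod p)) := by
    rw [hE]
    have h1 : (1 : Fin 2) = Fin.succ 0 := rfl
    rw [AlgEquiv.trans_apply, h1, MvPolynomial.finSuccEquiv_X_succ,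
      Polynomial.coe_mapAlgEquiv, Polynomial.map_C]
    congr 1
    show ι (MvPolynomial.X 0) = Polynomial.X
    rw [hι, AlgEquiv.trans_apply, MvPolynomial.finSuccEquiv_X_zero,
      Polynomial.coe_mapAlgEquiv, Polynomial.map_X]
  set Q' : Polynomial (Polynomial (ZMod p)) :=
    Polynomial.C (Polynomial.X : Polynomial (ZMod p)) ^ (p^2 - p) +
      Polynomial.X ^ (p-1) * (Polynomial.X ^ (p-1) -
        Polynomial.C (Polynomial.X : Polynomial (ZMod p)) ^ (p-1)) ^ (p-1) with hQ'
  set R' : Polynomial (Polynomial (ZMod p)) :=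
    Polynomial.X * Polynomial.C (Polynomial.X : Polynomial (ZMod p)) *
      (Polynomial.X ^ (p-1) -
        Polynomial.C (Polynomial.X : Polynomial (ZMod p)) ^ (p-1)) with hR'
  have hEq : E q = Q' := by
    rw [hq, hQ']
    simp only [map_add, _root_.map_mul, map_sub, map_pow, hE0, hE1]
  have hEr : E r = R' := by
    rw [hr, hR']
    simp only [map_add, _root_.map_mul, map_sub, map_pow, hE0, hE1]
  have hmap : Ideal.span {Q', R'} = Ideal.map (E : MvPolynomial (Fin 2) (ZMod p) →+* _)
      (Ideal.span {q, r}) := by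
    rw [Ideal.map_span, Set.image_insert_eq, Set.image_singleton]
    show _ = Ideal.span {E q, E r}
    rw [hEq, hEr]
  have e := Ideal.quotientEquivAlg (Ideal.span {q, r}) (Ideal.span {Q', R'}) E hmap
  rw [e.toLinearEquiv.finrank_eq]
  -- factor list
  set L : List (Polynomial (Polynomial (ZMod p))) :=
    (Polynomial.X - Polynomial.C 0) ::
      Polynomial.C (Polynomial.X : Polynomial (ZMod p)) ::
      ((Finset.univ.erase (0 : ZMod p)).toList.map fun a =>
        Polynomial.X - Polynomial.C (Polynomial.C a * Polynomial.X)) with hL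
  have hLprod : L.prod = R' := by
    rw [hL, List.prod_cons, List.prod_cons, Finset.prod_map_toList, prodid' p, hR']
    rw [map_zero, sub_zero, Polynomial.C_pow, ← mul_assoc]
  have hLlen : L.length = p + 1 := by
    rw [hL]
    simp only [List.length_cons, List.length_map, Finset.length_toList]
    rw [Finset.card_erase_of_mem (Finset.mem_univ (0 : ZMod p)), Finset.card_univ, ZMod.card]
    omega
  have hm : p - 1 ≠ 0 := by omega
  have hD : p ^ 2 - p ≠ 0 := by
    have : p < p ^ 2 := by nlinarith
    omega
  have hYD : ((Polynomial.X : Polynomial (ZMod p)) ^ (p ^ 2 - p)) ≠ 0 :=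
    pow_ne_zero _ Polynomial.X_ne_zero
  have hfacts : ∀ f ∈ L, (∀ x, f * x ∈ Ideal.span {Q'} → x ∈ Ideal.span {Q'}) ∧
      FiniteDimensional (ZMod p) (Polynomial (Polynomial (ZMod p)) ⧸ Ideal.span {Q', f}) ∧
      Module.finrank (ZMod p) (Polynomial (Polynomial (ZMod p)) ⧸ Ideal.span {Q', f}) = p ^ 2 - p := by
    intro f hf
    rw [hL] at hf
    rcases List.mem_cons.mp hf with rfl | hf
    · -- f = X - C 0
      have heval : Q'.eval 0 = (Polynomial.X : Polynomial (ZMod p)) ^ (p ^ 2 - p) := by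
        rw [hQ']; exact evalQ'' p 0 (Or.inl rfl)
      have hndvd : ¬ (Polynomial.X - Polynomial.C (0 : Polynomial (ZMod p))) ∣ Q' := by
        rw [Polynomial.dvd_iff_isRoot]
        intro h
        rw [Polynomial.IsRoot.def, heval] at h
        exact hYD h
      obtain ⟨hfd, hfr⟩ := base_eval' Q' 0 (by rw [heval]; exact hYD)
      exact ⟨nzd' (Polynomial.prime_X_sub_C 0) hndvd, hfd,
        by rw [hfr, heval, Polynomial.natDegree_X_pow]⟩
    rcases List.mem_cons.mp hf with rfl | hf
    · -- f = C Y
      have hmapQ : Q'.map (Polynomial.evalRingHom (0 : ZMod p)) =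
          (Polynomial.X : Polynomial (ZMod p)) ^ (p ^ 2 - p) := by
        rw [hQ']; exact mapQ'' p
      have hprime : Prime (Polynomial.C (Polynomial.X : Polynomial (ZMod p))) :=
        Polynomial.prime_C_iff.mpr Polynomial.prime_X
      have hndvd : ¬ Polynomial.C (Polynomial.X : Polynomial (ZMod p)) ∣ Q' := by
        rintro ⟨t, ht⟩
        have := congrArg (Polynomial.map (Polynomial.evalRingHom (0 : ZMod p))) ht
        rw [hmapQ, Polynomial.map_mul, Polynomial.map_C] at this
        simp only [Polynomial.coe_evalRingHom, Polynomial.eval_X, Polynomial.C_0, zero_mul] at this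
        exact hYD this
      obtain ⟨hfd, hfr⟩ := base_map' Q' (by rw [hmapQ]; exact hYD)
      exact ⟨nzd' hprime hndvd, hfd, by rw [hfr, hmapQ, Polynomial.natDegree_X_pow]⟩
    · -- f = X - C (C a * Y)
      obtain ⟨a, hamem, rfl⟩ := List.mem_map.mp hf
      have ha : a ≠ 0 := (Finset.mem_erase.mp (Finset.mem_toList.mp hamem)).1
      have heval : Q'.eval (Polynomial.C a * Polynomial.X) =
          (Polynomial.X : Polynomial (ZMod p)) ^ (p ^ 2 - p) := by
        rw [hQ']; exact evalQ'' p _ (Or.inr ⟨a, ha, rfl⟩)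
      have hndvd : ¬ (Polynomial.X - Polynomial.C (Polynomial.C a * Polynomial.X)) ∣ Q' := by
        rw [Polynomial.dvd_iff_isRoot]
        intro h
        rw [Polynomial.IsRoot.def, heval] at h
        exact hYD h
      obtain ⟨hfd, hfr⟩ := base_eval' Q' (Polynomial.C a * Polynomial.X)
        (by rw [heval]; exact hYD)
      exact ⟨nzd' (Polynomial.prime_X_sub_C _) hndvd, hfd, by rw [hfr, heval, Polynomial.natDegree_X_pow]⟩
  obtain ⟨_, hfr⟩ := multi' Q' (p ^ 2 - p) L hfacts
  rw [hLprod, hLlen] at hfr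
  rw [hfr]
  -- arithmetic
  obtain ⟨m, rfl⟩ : ∃ m, p = m + 2 := ⟨p - 2, by omega⟩
  have hh : (m+2)^2 = m*m + 4*m + 4 := by ring
  have ha1 : (m+2)^2 - (m+2) = m*m + 3*m + 2 := by omega
  have ha2 : (m+2)^2 - 1 = m*m + 4*m + 3 := by omega
  rw [ha1, ha2]
  ring
end

section
/- Let p be an odd prime. The two polynomials q and r are algebraically independent over ZMod p in (ZMod p)[ξ, η]. -/
open MvPolynomial

lemma key_indep {k : Type*} [CommRing k] (a b : ℕ) (ha : 0 < a)
    (g e : Polynomial k) (hg0 : g.eval 0 = 1) (he0 : e.eval 0 = 1)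
    (P : MvPolynomial (Fin 2) k)
    (hP : MvPolynomial.aeval ![Polynomial.C g * Polynomial.X ^ a,
        Polynomial.C (Polynomial.X * e) * Polynomial.X ^ b] P = 0) : P = 0 := by
  by_contra hne
  rw [MvPolynomial.aeval_def, MvPolynomial.eval₂_eq'] at hP
  simp only [Fin.prod_univ_two, Matrix.cons_val_zero, Matrix.cons_val_one,
    Matrix.head_cons] at hP
  have hterm : ∀ d : Fin 2 →₀ ℕ,
      (Polynomial.C g * Polynomial.X ^ a) ^ d 0 *
        (Polynomial.C (Polynomial.X * e) * Polynomial.X ^ b) ^ d 1 =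
      Polynomial.C (g ^ d 0 * (Polynomial.X * e) ^ d 1) *
        Polynomial.X ^ (a * d 0 + b * d 1) := by
    intro d
    simp only [mul_pow, ← pow_mul, map_mul, map_pow, pow_add]
    ring
  simp only [hterm, Polynomial.algebraMap_apply, Polynomial.algebraMap_eq] at hP
  obtain ⟨d₀, hd₀⟩ := MvPolynomial.support_nonempty.2 hne
  set N := a * d₀ 0 + b * d₀ 1 with hN
  set T := P.support.filter (fun d => a * d 0 + b * d 1 = N) with hT
  have hTne : T.Nonempty := ⟨d₀, Finset.mem_filter.2 ⟨hd₀, rfl⟩⟩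
  obtain ⟨dm, hdmT, hdmmin⟩ := Finset.exists_min_image T (fun d => d 1) hTne
  obtain ⟨hdmS, hdmN⟩ := Finset.mem_filter.1 hdmT
  set j := dm 1 with hj
  have h1 := congrArg (fun f => Polynomial.coeff f N) hP
  simp only [Polynomial.finset_sum_coeff, Polynomial.coeff_C_mul, Polynomial.coeff_X_pow,
    mul_ite, mul_one, mul_zero, Polynomial.coeff_zero] at h1
  have h2 := congrArg (fun f => Polynomial.coeff f j) h1
  simp only [Polynomial.finset_sum_coeff, apply_ite (fun f => Polynomial.coeff f j),
    Polynomial.coeff_C_mul, Polynomial.coeff_zero, Polynomial.coeff_zero] at h2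
  rw [Finset.sum_eq_single dm] at h2
  · rw [if_pos hdmN.symm] at h2
    have hrw : g ^ dm 0 * (Polynomial.X * e) ^ j = (g ^ dm 0 * e ^ j) * Polynomial.X ^ j := by
      rw [mul_pow]; ring
    rw [hrw, Polynomial.coeff_mul_X_pow', if_pos le_rfl, Nat.sub_self,
      Polynomial.coeff_zero_eq_eval_zero] at h2
    simp only [Polynomial.eval_mul, Polynomial.eval_pow, hg0, he0, one_pow, one_mul,
      mul_one] at h2
    exact (MvPolynomial.mem_support_iff.1 hdmS) h2
  · intro d hd hne'
    by_cases hc : N = a * d 0 + b * d 1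
    · rw [if_pos hc]
      have hdT : d ∈ T := Finset.mem_filter.2 ⟨hd, hc.symm⟩
      have hle : j ≤ d 1 := hdmmin d hdT
      rcases lt_or_eq_of_le hle with hlt | heq
      · have hrw : g ^ d 0 * (Polynomial.X * e) ^ d 1
            = (g ^ d 0 * e ^ d 1) * Polynomial.X ^ d 1 := by
          rw [mul_pow]; ring
        rw [hrw, Polynomial.coeff_mul_X_pow', if_neg (by omega), mul_zero]
      · exfalso
        have h0 : d 0 = dm 0 := by
          rw [← heq] at hc
          have : a * d 0 = a * dm 0 := by omega
          exact Nat.eq_of_mul_eq_mul_left ha this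
        apply hne'
        ext i
        fin_cases i
        · exact h0
        · show d 1 = dm 1
          omega
    · rw [if_neg hc]
  · intro h
    exact absurd hdmS h


/-- Let `p` be an odd prime.  The polynomials
`q = η^(p²-p) + ξ^(p-1)·(ξ^(p-1) - η^(p-1))^(p-1)` and `r = ξ·η·(ξ^(p-1) - η^(p-1))`
are algebraically independent over `ZMod p` in `(ZMod p)[ξ, η]`. -/
theorem stmt_7 (p : ℕ) (hp : p.Prime) (hodd : Odd p)
    (q r : MvPolynomial (Fin 2) (ZMod p))
    (hq : q = X 1 ^ (p ^ 2 - p) +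
      X 0 ^ (p - 1) * (X 0 ^ (p - 1) - X 1 ^ (p - 1)) ^ (p - 1))
    (hr : r = X 0 * X 1 * (X 0 ^ (p - 1) - X 1 ^ (p - 1))) :
    AlgebraicIndependent (ZMod p) ![q, r] := by
  have hp2 : 2 ≤ p := hp.two_le
  have hpne2 : p ≠ 2 := by
    rintro rfl
    exact (Nat.not_odd_iff_even.2 (by norm_num)) hodd
  obtain ⟨m, hm⟩ : ∃ m, p = m + 1 := ⟨p - 1, by omega⟩
  have hm1 : 1 ≤ m := by omega
  have e1 : p - 1 = m := by omega
  have e2 : p ^ 2 - p = m * m + m := by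
    apply Nat.sub_eq_of_eq_add
    subst hm; ring
  set g : Polynomial (ZMod p) :=
    Polynomial.X ^ (m * m + m) + (1 - Polynomial.X ^ m) ^ m with hg
  set e : Polynomial (ZMod p) := 1 - Polynomial.X ^ m with he
  set v : Fin 2 → Polynomial (Polynomial (ZMod p)) :=
    ![Polynomial.X, Polynomial.C Polynomial.X * Polynomial.X] with hv
  have h1 : (Polynomial.X : Polynomial (Polynomial (ZMod p))) ^ m -
      (Polynomial.C Polynomial.X * Polynomial.X) ^ m
      = Polynomial.C e * Polynomial.X ^ m := by
    simp only [he, mul_pow, map_sub, map_one, map_pow, sub_mul, one_mul]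
  have hΦq : MvPolynomial.aeval v q = Polynomial.C g * Polynomial.X ^ (m * m + m) := by
    rw [hq, e1, e2]
    simp only [map_add, map_mul, map_pow, map_sub, MvPolynomial.aeval_X]
    simp only [hv, Matrix.cons_val_zero, Matrix.cons_val_one, Matrix.head_cons]
    rw [h1, mul_pow, mul_pow, ← pow_mul]
    simp only [hg, map_add, map_pow]
    ring
  have hΦr : MvPolynomial.aeval v r
      = Polynomial.C (Polynomial.X * e) * Polynomial.X ^ (m + 2) := by
    rw [hr, e1]
    simp only [map_add, map_mul, map_pow, map_sub, MvPolynomial.aeval_X]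
    simp only [hv, Matrix.cons_val_zero, Matrix.cons_val_one, Matrix.head_cons]
    rw [h1]
    ring
  have hg0 : g.eval 0 = 1 := by
    simp [hg, he, zero_pow (by omega : m * m + m ≠ 0), zero_pow (by omega : m ≠ 0)]
  have he0 : e.eval 0 = 1 := by
    simp [he, zero_pow (by omega : m ≠ 0)]
  rw [algebraicIndependent_iff]
  intro P hPz
  have ha : 0 < m * m + m := by omega
  apply key_indep (m * m + m) (m + 2) ha g e hg0 he0 P
  have hcomp := MvPolynomial.comp_aeval_apply (f := ![q, r]) (MvPolynomial.aeval v) P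
  rw [hPz, map_zero] at hcomp
  have hfun : (fun i => MvPolynomial.aeval v (![q, r] i)) =
      ![Polynomial.C g * Polynomial.X ^ (m * m + m),
        Polynomial.C (Polynomial.X * e) * Polynomial.X ^ (m + 2)] := by
    funext i
    fin_cases i
    · simpa using hΦq
    · simpa using hΦr
  rw [hfun] at hcomp
  exact hcomp.symm
end

section
/- Let p be an odd prime, k a field, and ω ∈ k a primitive p-th root of unity. For any integers i, j, i′, j′ with 1 ≤ i, j, i′, j′ ≤ p, (i, j) ≠ (p, p) and (i′, j′) ≠ (p, p), there exists an invertible p×p matrix P over k such that P·(σ^i·τ^j)·P⁻¹ = σ^{i′}·τ^{j′}. In particular, any two elements different from the identity of the subgroup of PGL_p(k) generated by the classes of σ and τ are conjugate in PGL_p(k). -/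
open Matrix

namespace Stmt11Aux

set_option linter.unusedSectionVars false
set_option maxHeartbeats 1000000

variable {p : ℕ} [hpf : Fact p.Prime] {k : Type*} [Field k]

/-- twisted shift matrix: sends `e t` to `c t • e (t+a)`. -/
def Mk (p : ℕ) (k : Type*) [Field k] (a : ZMod p) (c : ZMod p → k) :
    Matrix (ZMod p) (ZMod p) k :=
  Matrix.of fun s t => if s = t + a then c t else 0

lemma Mk_mul (a b : ZMod p) (c d : ZMod p → k) :
    Mk p k a c * Mk p k b d = Mk p k (a + b) (fun t => c (t + b) * d t) := by
  ext s t
  simp only [Mk, Matrix.mul_apply, Matrix.of_apply]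
  rw [Finset.sum_eq_single (t + b)]
  · have h1 : (t + b) + a = t + (a + b) := by ring
    rw [h1, if_pos rfl]
    split_ifs <;> simp
  · intro r _ hr
    rw [if_neg hr, mul_zero]
  · intro h; exact absurd (Finset.mem_univ _) h

lemma Mk_zero_one : Mk p k 0 1 = 1 := by
  ext s t
  simp only [Mk, Matrix.of_apply, add_zero, Matrix.one_apply, Pi.one_apply]

lemma Mk_diag (c : ZMod p → k) : Mk p k 0 c = Matrix.diagonal c := by
  ext s t
  by_cases h : s = t
  · subst h; simp [Mk, Matrix.diagonal_apply_eq]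
  · simp [Mk, Matrix.diagonal_apply_ne _ h, h]

def opow (ω : k) (t : ZMod p) : k := ω ^ t.val

lemma opow_natCast {ω : k} (hω : ω ^ p = 1) (n : ℕ) : opow ω ((n : ZMod p)) = ω ^ n := by
  rw [opow, ZMod.val_natCast]
  conv_rhs => rw [← Nat.div_add_mod n p, pow_add, pow_mul, hω, one_pow, one_mul]

lemma opow_add {ω : k} (hω : ω ^ p = 1) (x y : ZMod p) :
    opow ω (x + y) = opow ω x * opow ω y := by
  have hx : ((x.val : ℕ) : ZMod p) = x := ZMod.natCast_rightInverse x
  have hy : ((y.val : ℕ) : ZMod p) = y := ZMod.natCast_rightInverse y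
  have h : opow ω (x + y) = opow ω (((x.val + y.val : ℕ) : ZMod p)) := by
    rw [Nat.cast_add, hx, hy]
  rw [h, opow_natCast hω, pow_add, opow, opow]

lemma opow_pow {ω : k} (hω : ω ^ p = 1) (x : ZMod p) (n : ℕ) :
    opow ω x ^ n = opow ω ((n : ZMod p) * x) := by
  have hx : ((x.val : ℕ) : ZMod p) = x := ZMod.natCast_rightInverse x
  rw [opow, ← pow_mul, ← opow_natCast hω (x.val * n), Nat.cast_mul, hx, mul_comm]

lemma opow_zero (ω : k) : opow (p := p) ω 0 = 1 := by
  simp [opow, ZMod.val_zero]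

def zequiv (p : ℕ) [NeZero p] : Fin p ≃ ZMod p where
  toFun r := ((r : ℕ) : ZMod p)
  invFun t := ⟨t.val, t.val_lt⟩
  left_inv r := Fin.ext (ZMod.val_cast_of_lt r.isLt)
  right_inv t := ZMod.natCast_rightInverse t

def sequiv (p : ℕ) [NeZero p] : Fin p ≃ ZMod p := (zequiv p).trans (Equiv.addRight 1)

lemma sequiv_apply (t : Fin p) : sequiv p t = ((t : ℕ) : ZMod p) + 1 := rfl

noncomputable def ψ (p : ℕ) [NeZero p] (k : Type*) [Field k] :
    Matrix (ZMod p) (ZMod p) k ≃ₐ[k] Matrix (Fin p) (Fin p) k :=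
  Matrix.reindexAlgEquiv k k ((sequiv p).symm)

lemma ψ_apply (M : Matrix (ZMod p) (ZMod p) k) (s t : Fin p) :
    ψ p k M s t = M (sequiv p s) (sequiv p t) := by
  simp [ψ, Matrix.reindexAlgEquiv_apply, Matrix.reindex_apply, Matrix.submatrix_apply]

lemma sigma_eq :
    (Matrix.of fun s t : Fin p => if (s : ℕ) = ((t : ℕ) + 1) % p then (1:k) else 0)
      = ψ p k (Mk p k 1 1) := by
  ext s t
  rw [ψ_apply]
  simp only [Mk, Matrix.of_apply, sequiv_apply, Pi.one_apply]
  congr 1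
  rw [eq_iff_iff, add_left_inj]
  have hc : ((t:ℕ) : ZMod p) + 1 = (((t:ℕ)+1 : ℕ) : ZMod p) := by push_cast; ring
  rw [hc, ZMod.natCast_eq_natCast_iff', Nat.mod_eq_of_lt s.isLt]

lemma tau_eq {ω : k} (hω : ω ^ p = 1) :
    (Matrix.diagonal fun t : Fin p => ω ^ ((t : ℕ) + 1)) = ψ p k (Matrix.diagonal (opow ω)) := by
  ext s t
  rw [ψ_apply]
  by_cases h : s = t
  · subst h
    rw [Matrix.diagonal_apply_eq, Matrix.diagonal_apply_eq, sequiv_apply]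
    have hc : ((s:ℕ) : ZMod p) + 1 = (((s:ℕ)+1 : ℕ) : ZMod p) := by push_cast; ring
    rw [hc, opow_natCast hω]
  · rw [Matrix.diagonal_apply_ne _ h,
      Matrix.diagonal_apply_ne _ (fun hc => h ((sequiv p).injective hc))]

lemma Mk_one_pow (m : ℕ) : (Mk p k 1 1) ^ m = Mk p k (m : ZMod p) 1 := by
  induction m with
  | zero => simpa using Mk_zero_one.symm
  | succ m ih =>
      rw [pow_succ, ih, Mk_mul]
      have h : (fun t : ZMod p => (1 : ZMod p → k) (t + 1) * (1 : ZMod p → k) t)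
          = (1 : ZMod p → k) := by funext t; simp
      rw [h]
      push_cast
      ring_nf

lemma diag_pow {ω : k} (hω : ω ^ p = 1) (n : ℕ) :
    (Matrix.diagonal (opow ω)) ^ n = Mk p k 0 (fun t => opow ω ((n : ZMod p) * t)) := by
  rw [Matrix.diagonal_pow, Mk_diag]
  have h : (opow (p := p) ω) ^ n = fun t => opow ω ((n : ZMod p) * t) := by
    funext t
    rw [Pi.pow_apply, opow_pow hω]
  rw [h]

lemma prodform {ω : k} (hω : ω ^ p = 1) (m n : ℕ) :
    (Mk p k 1 1) ^ m * (Matrix.diagonal (opow ω)) ^ n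
      = Mk p k (m : ZMod p) (fun t => opow ω ((n : ZMod p) * t)) := by
  rw [Mk_one_pow, diag_pow hω, Mk_mul]
  simp

lemma key_ne (hp2 : (2 : ZMod p) ≠ 0) {ω : k} (hω : IsPrimitiveRoot ω p)
    (a jz : ZMod p) (ha : a ≠ 0) :
    ∃ Q : (Matrix (ZMod p) (ZMod p) k)ˣ,
      (Q : Matrix (ZMod p) (ZMod p) k) * Matrix.diagonal (opow ω) *
        ((Q⁻¹ : (Matrix (ZMod p) (ZMod p) k)ˣ) : Matrix (ZMod p) (ZMod p) k)
        = Mk p k a (fun t => opow ω (jz * t)) := by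
  have h1 : ω ^ p = 1 := hω.pow_eq_one
  have h0 : ω ≠ 0 := by
    intro h
    rw [h, zero_pow (NeZero.ne p)] at h1
    exact zero_ne_one h1
  set e : ZMod p := jz * (2 * a)⁻¹ with he
  have h2a : (2 * a) ≠ 0 := mul_ne_zero hp2 ha
  set Q : Matrix (ZMod p) (ZMod p) k :=
    Matrix.of (fun t s => opow ω (e*t*t - e*a*t - a⁻¹*s*t)) with hQ
  have hdec : Q = Matrix.diagonal (fun t => opow ω (e*t*t - e*a*t)) *
      ((Matrix.vandermonde (fun r : Fin p => opow ω (-(a⁻¹ * ((r : ℕ) : ZMod p))))).submatrix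
        (zequiv p).symm (zequiv p).symm) := by
    ext t s
    rw [Matrix.diagonal_mul]
    simp only [hQ, Matrix.of_apply, Matrix.submatrix_apply, Matrix.vandermonde_apply]
    have hv : (((((zequiv p).symm t) : Fin p) : ℕ) : ZMod p) = t := ZMod.natCast_rightInverse t
    rw [hv, opow_pow h1]
    rw [← opow_add h1]
    congr 1
    have hs : (((((zequiv p).symm s) : Fin p) : ℕ) : ZMod p) = s := ZMod.natCast_rightInverse s
    rw [hs]
    ring
  have hinj : Function.Injective (fun r : Fin p => opow ω (-(a⁻¹ * ((r : ℕ) : ZMod p)))) := by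
    intro r r' hrr
    simp only [opow] at hrr
    have h5 := hω.pow_inj (ZMod.val_lt _) (ZMod.val_lt _) hrr
    have h2 : -(a⁻¹ * ((r : ℕ) : ZMod p)) = -(a⁻¹ * ((r' : ℕ) : ZMod p)) :=
      ZMod.val_injective _ h5
    have h3 : ((r : ℕ) : ZMod p) = ((r' : ℕ) : ZMod p) := by
      have hai : a⁻¹ ≠ 0 := inv_ne_zero ha
      exact mul_left_cancel₀ hai (neg_inj.mp h2)
    have h4 : (r : ℕ) % p = (r' : ℕ) % p := by
      rwa [ZMod.natCast_eq_natCast_iff'] at h3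
    rw [Nat.mod_eq_of_lt r.isLt, Nat.mod_eq_of_lt r'.isLt] at h4
    exact Fin.ext h4
  have hdet : IsUnit Q.det := by
    rw [hdec, Matrix.det_mul, Matrix.det_diagonal,
      Matrix.det_submatrix_equiv_self]
    apply IsUnit.mul
    · exact (Finset.prod_ne_zero_iff.mpr (fun t _ => pow_ne_zero _ h0)).isUnit
    · exact (Matrix.det_vandermonde_ne_zero_iff.mpr hinj).isUnit
  have heq : Q * Matrix.diagonal (opow ω) = Mk p k a (fun t => opow ω (jz * t)) * Q := by
    ext s s'
    rw [Matrix.mul_diagonal, Matrix.mul_apply]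
    rw [Finset.sum_eq_single (s - a)]
    · simp only [Mk, Matrix.of_apply, sub_add_cancel, eq_self_iff_true, if_true, hQ]
      rw [← opow_add h1, ← opow_add h1]
      congr 1
      have hai : a⁻¹ * a = 1 := inv_mul_cancel₀ ha
      have h2e : 2 * e * a = jz := by
        rw [he]; field_simp
      linear_combination (s - a) * h2e - s' * hai
    · intro r _ hr
      rw [Mk, Matrix.of_apply, if_neg, zero_mul]
      intro hcon
      exact hr (by rw [hcon]; ring)
    · intro h; exact absurd (Finset.mem_univ _) h
  have hQu : IsUnit Q := (Matrix.isUnit_iff_isUnit_det Q).mpr hdet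
  refine ⟨hQu.unit, ?_⟩
  have hu : (hQu.unit : Matrix (ZMod p) (ZMod p) k) = Q := hQu.unit_spec
  calc (hQu.unit : Matrix (ZMod p) (ZMod p) k) * Matrix.diagonal (opow ω) *
        ((hQu.unit⁻¹ : (Matrix (ZMod p) (ZMod p) k)ˣ) : Matrix (ZMod p) (ZMod p) k)
      = (Mk p k a (fun t => opow ω (jz * t)) * (hQu.unit : Matrix (ZMod p) (ZMod p) k)) *
        ((hQu.unit⁻¹ : (Matrix (ZMod p) (ZMod p) k)ˣ) : Matrix (ZMod p) (ZMod p) k) := by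
        rw [hu, heq]
    _ = Mk p k a (fun t => opow ω (jz * t)) := by
        rw [mul_assoc, Units.mul_inv, mul_one]

lemma key_zero {ω : k} (hω : ω ^ p = 1)
    (jz : ZMod p) (hj : jz ≠ 0) :
    ∃ Q : (Matrix (ZMod p) (ZMod p) k)ˣ,
      (Q : Matrix (ZMod p) (ZMod p) k) * Matrix.diagonal (opow ω) *
        ((Q⁻¹ : (Matrix (ZMod p) (ZMod p) k)ˣ) : Matrix (ZMod p) (ZMod p) k)
        = Mk p k 0 (fun t => opow ω (jz * t)) := by
  set Q : Matrix (ZMod p) (ZMod p) k :=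
    Matrix.of (fun t s => if t = jz⁻¹ * s then 1 else 0) with hQ
  set Q' : Matrix (ZMod p) (ZMod p) k :=
    Matrix.of (fun t s => if t = jz * s then 1 else 0) with hQ'
  have hQQ' : Q * Q' = 1 := by
    ext t s
    rw [Matrix.mul_apply, Finset.sum_eq_single (jz * s)]
    · rw [hQ, hQ', Matrix.of_apply, Matrix.of_apply, if_pos rfl, mul_one,
        inv_mul_cancel_left₀ hj, Matrix.one_apply]
    · intro r _ hr
      rw [hQ', Matrix.of_apply, if_neg hr, mul_zero]
    · intro h; exact absurd (Finset.mem_univ _) h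
  have hQ'Q : Q' * Q = 1 := by
    ext t s
    rw [Matrix.mul_apply, Finset.sum_eq_single (jz⁻¹ * s)]
    · rw [hQ, hQ', Matrix.of_apply, Matrix.of_apply, if_pos rfl, mul_one,
        mul_inv_cancel_left₀ hj, Matrix.one_apply]
    · intro r _ hr
      rw [hQ, Matrix.of_apply, if_neg hr, mul_zero]
    · intro h; exact absurd (Finset.mem_univ _) h
  set U : (Matrix (ZMod p) (ZMod p) k)ˣ := ⟨Q, Q', hQQ', hQ'Q⟩ with hU
  have heq : Q * Matrix.diagonal (opow ω) = Mk p k 0 (fun t => opow ω (jz * t)) * Q := by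
    rw [Mk_diag]
    ext t s
    rw [Matrix.mul_diagonal, Matrix.diagonal_mul, hQ]
    show (if t = jz⁻¹ * s then (1:k) else 0) * opow ω s
      = opow ω (jz * t) * (if t = jz⁻¹ * s then (1:k) else 0)
    split_ifs with h
    · rw [one_mul, mul_one, h, mul_inv_cancel_left₀ hj]
    · rw [zero_mul, mul_zero]
  refine ⟨U, ?_⟩
  have hu : (U : Matrix (ZMod p) (ZMod p) k) = Q := rfl
  calc (U : Matrix (ZMod p) (ZMod p) k) * Matrix.diagonal (opow ω) *
        ((U⁻¹ : (Matrix (ZMod p) (ZMod p) k)ˣ) : Matrix (ZMod p) (ZMod p) k)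
      = (Mk p k 0 (fun t => opow ω (jz * t)) * (U : Matrix (ZMod p) (ZMod p) k)) *
        ((U⁻¹ : (Matrix (ZMod p) (ZMod p) k)ˣ) : Matrix (ZMod p) (ZMod p) k) := by
        rw [hu, heq]
    _ = Mk p k 0 (fun t => opow ω (jz * t)) := by
        rw [mul_assoc, Units.mul_inv, mul_one]

lemma keyZ (hp2 : (2 : ZMod p) ≠ 0) {ω : k} (hω : IsPrimitiveRoot ω p) (m n : ℕ)
    (h : ¬((m : ZMod p) = 0 ∧ (n : ZMod p) = 0)) :
    ∃ R : (Matrix (ZMod p) (ZMod p) k)ˣ,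
      (R : Matrix (ZMod p) (ZMod p) k) * ((Mk p k 1 1) ^ m * (Matrix.diagonal (opow ω)) ^ n) *
        ((R⁻¹ : (Matrix (ZMod p) (ZMod p) k)ˣ) : Matrix (ZMod p) (ZMod p) k)
        = Matrix.diagonal (opow ω) := by
  have h1 := hω.pow_eq_one
  rw [prodform h1]
  obtain ⟨Q, hQ⟩ : ∃ Q : (Matrix (ZMod p) (ZMod p) k)ˣ,
      (Q : Matrix (ZMod p) (ZMod p) k) * Matrix.diagonal (opow ω) *
        ((Q⁻¹ : (Matrix (ZMod p) (ZMod p) k)ˣ) : Matrix (ZMod p) (ZMod p) k)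
        = Mk p k (m : ZMod p) (fun t => opow ω ((n : ZMod p) * t)) := by
    by_cases ha : (m : ZMod p) = 0
    · have hn : (n : ZMod p) ≠ 0 := fun hn => h ⟨ha, hn⟩
      rw [ha]
      exact key_zero h1 _ hn
    · exact key_ne hp2 hω _ _ ha
  refine ⟨Q⁻¹, ?_⟩
  rw [inv_inv, ← hQ]
  simp only [← mul_assoc]
  rw [Units.inv_mul, one_mul, mul_assoc, Units.inv_mul, mul_one]

lemma master (hp2 : (2 : ZMod p) ≠ 0) {ω : k} (hω : IsPrimitiveRoot ω p) (m n : ℕ)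
    (h : ¬((m : ZMod p) = 0 ∧ (n : ZMod p) = 0)) :
    ∃ P : (Matrix (Fin p) (Fin p) k)ˣ,
      (P : Matrix (Fin p) (Fin p) k) *
          ((ψ p k (Mk p k 1 1)) ^ m * (ψ p k (Matrix.diagonal (opow ω))) ^ n) *
          ((P⁻¹ : (Matrix (Fin p) (Fin p) k)ˣ) : Matrix (Fin p) (Fin p) k)
        = ψ p k (Matrix.diagonal (opow ω)) := by
  obtain ⟨R, hR⟩ := keyZ hp2 hω m n h
  let f : Matrix (ZMod p) (ZMod p) k →* Matrix (Fin p) (Fin p) k :=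
    (ψ p k).toAlgHom.toRingHom.toMonoidHom
  have hf : ∀ X, f X = ψ p k X := fun _ => rfl
  refine ⟨Units.map f R, ?_⟩
  have hinv : ((Units.map f R)⁻¹ : (Matrix (Fin p) (Fin p) k)ˣ) = Units.map f R⁻¹ :=
    (map_inv (Units.map f) R).symm
  rw [hinv, Units.coe_map, Units.coe_map]
  simp only [hf, MonoidHom.coe_coe]
  rw [← map_pow, ← map_pow, ← _root_.map_mul (ψ p k), ← _root_.map_mul (ψ p k),
    ← _root_.map_mul (ψ p k), hR]

lemma Mk_smul (w : k) (a : ZMod p) (c : ZMod p → k) :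
    w • Mk p k a c = Mk p k a (fun t => w * c t) := by
  ext s t
  simp only [Mk, Matrix.smul_apply, Matrix.of_apply, smul_eq_mul]
  split_ifs <;> simp

lemma tau_sigma_comm {ω : k} (h1 : ω ^ p = 1) :
    Matrix.diagonal (opow ω) * Mk p k 1 1 = ω • (Mk p k 1 1 * Matrix.diagonal (opow ω)) := by
  have hv1 : opow (p := p) ω 1 = ω := by rw [opow, ZMod.val_one p, pow_one]
  ext s t
  rw [Matrix.smul_apply, Matrix.diagonal_mul, Matrix.mul_diagonal]
  show opow ω s * (if s = t + 1 then (1:k) else 0)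
      = ω • ((if s = t + 1 then (1:k) else 0) * opow ω t)
  split_ifs with h
  · rw [h, mul_one, one_mul, opow_add h1, hv1, smul_eq_mul, mul_comm]
  · rw [mul_zero, zero_mul, smul_zero]

end Stmt11Aux

open Stmt11Aux in
/-- Let `p` be an odd prime, `k` a field and `ω ∈ k` a primitive `p`-th root of unity.
With `σ` the cyclic permutation matrix and `τ = diag(ω, ω², …, ω^{p-1}, 1)`: for all
`1 ≤ i, j, i', j' ≤ p` with `(i, j) ≠ (p, p)` and `(i', j') ≠ (p, p)` there is an
invertible matrix `P` with `P·(σ^i·τ^j)·P⁻¹ = σ^{i'}·τ^{j'}`.  In particular any two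
non-identity elements of the subgroup of `PGL_p(k) = GL_p(k)/center` generated by the
classes of `σ` and `τ` are conjugate. -/
theorem stmt_11 (p : ℕ) (hp : p.Prime) (hodd : Odd p) (k : Type*) [Field k]
    (ω : k) (hω : IsPrimitiveRoot ω p)
    (σ τ : Matrix (Fin p) (Fin p) k)
    (hσ : σ = Matrix.of fun s t : Fin p => if (s : ℕ) = ((t : ℕ) + 1) % p then 1 else 0)
    (hτ : τ = Matrix.diagonal fun t : Fin p => ω ^ ((t : ℕ) + 1)) :
    (∀ i j i' j' : ℕ, 1 ≤ i → i ≤ p → 1 ≤ j → j ≤ p → 1 ≤ i' → i' ≤ p → 1 ≤ j' → j' ≤ p →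
      (i, j) ≠ (p, p) → (i', j') ≠ (p, p) →
      ∃ P : (Matrix (Fin p) (Fin p) k)ˣ,
        (P : Matrix (Fin p) (Fin p) k) * (σ ^ i * τ ^ j) *
            ((P⁻¹ : (Matrix (Fin p) (Fin p) k)ˣ) : Matrix (Fin p) (Fin p) k) =
          σ ^ i' * τ ^ j') ∧
    (∀ S T : (Matrix (Fin p) (Fin p) k)ˣ,
      (S : Matrix (Fin p) (Fin p) k) = σ → (T : Matrix (Fin p) (Fin p) k) = τ →
      ∀ a b : (Matrix (Fin p) (Fin p) k)ˣ ⧸ Subgroup.center (Matrix (Fin p) (Fin p) k)ˣ,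
        a ∈ Subgroup.closure {QuotientGroup.mk S, QuotientGroup.mk T} →
        b ∈ Subgroup.closure {QuotientGroup.mk S, QuotientGroup.mk T} →
        a ≠ 1 → b ≠ 1 → IsConj a b) := by
  haveI : Fact p.Prime := ⟨hp⟩
  subst hσ hτ
  have h1 : ω ^ p = 1 := hω.pow_eq_one
  have h0 : ω ≠ 0 := by
    intro h
    rw [h, zero_pow hp.ne_zero] at h1
    exact zero_ne_one h1
  have hp2 : (2 : ZMod p) ≠ 0 := by
    intro h2
    have h2' : ((2 : ℕ) : ZMod p) = 0 := by exact_mod_cast h2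
    rw [ZMod.natCast_eq_zero_iff] at h2'
    have hpeq := (Nat.prime_dvd_prime_iff_eq hp Nat.prime_two).mp h2'
    rw [hpeq] at hodd
    exact (by decide : ¬ Odd 2) hodd
  have hσe := Stmt11Aux.sigma_eq (p := p) (k := k)
  have hτe := Stmt11Aux.tau_eq (p := p) (k := k) h1
  rw [hσe, hτe]
  constructor
  · -- Part 1
    intro i j i' j' hi1 hip hj1 hjp hi'1 hi'p hj'1 hj'p hne hne'
    have hnzgen : ∀ m n : ℕ, 1 ≤ m → m ≤ p → 1 ≤ n → n ≤ p → (m, n) ≠ (p, p) →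
        ¬((m : ZMod p) = 0 ∧ (n : ZMod p) = 0) := by
      rintro m n h1m hmp h1n hnp hmn ⟨hm0, hn0⟩
      rw [ZMod.natCast_eq_zero_iff] at hm0 hn0
      have hm : m = p := le_antisymm hmp (Nat.le_of_dvd (by omega) hm0)
      have hn : n = p := le_antisymm hnp (Nat.le_of_dvd (by omega) hn0)
      exact hmn (by rw [hm, hn])
    obtain ⟨P₁, hP₁⟩ := Stmt11Aux.master hp2 hω i j (hnzgen i j hi1 hip hj1 hjp hne)
    obtain ⟨P₂, hP₂⟩ := Stmt11Aux.master hp2 hω i' j' (hnzgen i' j' hi'1 hi'p hj'1 hj'p hne')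
    refine ⟨P₂⁻¹ * P₁, ?_⟩
    have h₂' : ψ p k (Mk p k 1 1) ^ i' * ψ p k (Matrix.diagonal (opow ω)) ^ j'
        = ((P₂⁻¹ : (Matrix (Fin p) (Fin p) k)ˣ) : Matrix (Fin p) (Fin p) k) *
          ψ p k (Matrix.diagonal (opow ω)) * (P₂ : Matrix (Fin p) (Fin p) k) := by
      conv_rhs => rw [← hP₂]
      simp only [← mul_assoc]
      rw [Units.inv_mul, one_mul, mul_assoc, Units.inv_mul, mul_one]
    rw [Units.val_mul, _root_.mul_inv_rev, inv_inv, Units.val_mul, h₂']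
    conv_rhs => rw [← hP₁]
    simp only [mul_assoc]
  · -- Part 2
    intro S T hS hT a b ha hb ha1 hb1
    have hSp : S ^ p = 1 := by
      apply Units.ext
      rw [Units.val_pow_eq_pow_val, hS, Units.val_one, ← _root_.map_pow,
        Stmt11Aux.Mk_one_pow, ZMod.natCast_self, Stmt11Aux.Mk_zero_one, _root_.map_one]
    have hTp : T ^ p = 1 := by
      apply Units.ext
      rw [Units.val_pow_eq_pow_val, hT, Units.val_one, ← _root_.map_pow,
        Stmt11Aux.diag_pow h1, ZMod.natCast_self]
      have hfun : (fun t : ZMod p => Stmt11Aux.opow ω ((0 : ZMod p) * t)) = (1 : ZMod p → k) := by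
        funext t
        rw [zero_mul, Stmt11Aux.opow_zero]
        rfl
      rw [hfun, Stmt11Aux.Mk_zero_one, _root_.map_one]
    set φq := QuotientGroup.mk' (Subgroup.center (Matrix (Fin p) (Fin p) k)ˣ) with hφq
    have hωu : IsUnit ω := IsUnit.mk0 ω h0
    set z : (Matrix (Fin p) (Fin p) k)ˣ :=
      Units.map (algebraMap k (Matrix (Fin p) (Fin p) k)).toMonoidHom hωu.unit with hzdef
    have hz : (z : Matrix (Fin p) (Fin p) k) = ω • (1 : Matrix (Fin p) (Fin p) k) := by
      rw [hzdef, Units.coe_map]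
      simp [Algebra.algebraMap_eq_smul_one, hωu.unit_spec]
    have hzc : z ∈ Subgroup.center (Matrix (Fin p) (Fin p) k)ˣ := by
      rw [Subgroup.mem_center_iff]
      intro g
      apply Units.ext
      rw [Units.val_mul, Units.val_mul, hz, smul_mul_assoc, one_mul, mul_smul_comm, mul_one]
    have hTS : T * S = z * (S * T) := by
      apply Units.ext
      rw [Units.val_mul, Units.val_mul, Units.val_mul, hz, hS, hT, smul_mul_assoc, one_mul,
        ← _root_.map_mul (ψ p k), ← _root_.map_mul (ψ p k), Stmt11Aux.tau_sigma_comm h1,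
        _root_.map_smul]
    have hzq : φq z = 1 := (QuotientGroup.eq_one_iff z).mpr hzc
    have hcomm : Commute (φq S) (φq T) := by
      show φq S * φq T = φq T * φq S
      have hTSq : φq (T * S) = φq (S * T) := by
        rw [hTS, _root_.map_mul, hzq, one_mul]
      rw [← _root_.map_mul, ← _root_.map_mul]
      exact hTSq.symm
    have hSq : φq S ^ p = 1 := by rw [← _root_.map_pow, hSp, _root_.map_one]
    have hTq : φq T ^ p = 1 := by rw [← _root_.map_pow, hTp, _root_.map_one]
    have hmk : ∀ g : (Matrix (Fin p) (Fin p) k)ˣ,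
        (QuotientGroup.mk g : (Matrix (Fin p) (Fin p) k)ˣ ⧸
          Subgroup.center (Matrix (Fin p) (Fin p) k)ˣ) = φq g := fun _ => rfl
    have hchar : ∀ g : (Matrix (Fin p) (Fin p) k)ˣ ⧸ Subgroup.center (Matrix (Fin p) (Fin p) k)ˣ,
        g ∈ Subgroup.closure {QuotientGroup.mk S, QuotientGroup.mk T} →
        ∃ m n : ℕ, g = φq S ^ m * φq T ^ n := by
      intro g hg
      refine Subgroup.closure_induction ?_ ?_ ?_ ?_ hg
      · intro x hx
        simp only [Set.mem_insert_iff, Set.mem_singleton_iff] at hx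
        rcases hx with hx | hx
        · refine ⟨1, 0, ?_⟩
          rw [pow_one, pow_zero, mul_one, hx, hmk]
        · refine ⟨0, 1, ?_⟩
          rw [pow_zero, pow_one, one_mul, hx, hmk]
      · exact ⟨0, 0, by simp⟩
      · rintro x y hxm hym ⟨m, n, rfl⟩ ⟨m', n', rfl⟩
        refine ⟨m + m', n + n', ?_⟩
        have hsw : φq T ^ n * φq S ^ m' = φq S ^ m' * φq T ^ n :=
          (hcomm.symm.pow_pow n m').eq
        rw [pow_add, pow_add, mul_assoc, ← mul_assoc (φq T ^ n), hsw,
          mul_assoc (φq S ^ m'), ← mul_assoc]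
      · rintro x hxm ⟨m, n, rfl⟩
        refine ⟨m * (p - 1), n * (p - 1), ?_⟩
        have hmp : ∀ (x : (Matrix (Fin p) (Fin p) k)ˣ ⧸
            Subgroup.center (Matrix (Fin p) (Fin p) k)ˣ), x ^ p = 1 → ∀ m : ℕ,
            (x ^ m)⁻¹ = x ^ (m * (p - 1)) := by
          intro x hx m
          apply inv_eq_of_mul_eq_one_right
          rw [← pow_add]
          have had : m + m * (p - 1) = m * p := by
            calc m + m * (p - 1) = m * (1 + (p - 1)) := by ring
            _ = m * p := by rw [Nat.add_sub_cancel' hp.one_lt.le]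
          rw [had, pow_mul', hx, one_pow]
        rw [_root_.mul_inv_rev, hmp _ hTq, hmp _ hSq]
        exact ((hcomm.symm).pow_pow _ _).eq
    obtain ⟨m, n, ham⟩ := hchar a ha
    obtain ⟨m', n', hbm⟩ := hchar b hb
    have hnz : ∀ m n : ℕ, (φq S ^ m * φq T ^ n) ≠ 1 →
        ¬((m : ZMod p) = 0 ∧ (n : ZMod p) = 0) := by
      rintro m n hne ⟨hm0, hn0⟩
      rw [ZMod.natCast_eq_zero_iff] at hm0 hn0
      obtain ⟨c, rfl⟩ := hm0
      obtain ⟨d, rfl⟩ := hn0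
      exact hne (by rw [pow_mul, pow_mul, hSq, hTq, one_pow, one_pow, one_mul])
    have hconj : ∀ m n : ℕ, ¬((m : ZMod p) = 0 ∧ (n : ZMod p) = 0) →
        IsConj (φq S ^ m * φq T ^ n) (φq T) := by
      intro m n hnz'
      obtain ⟨P, hP⟩ := Stmt11Aux.master hp2 hω m n hnz'
      have hXc : ((S ^ m * T ^ n : (Matrix (Fin p) (Fin p) k)ˣ) : Matrix (Fin p) (Fin p) k)
          = ψ p k (Mk p k 1 1) ^ m * ψ p k (Matrix.diagonal (opow ω)) ^ n := by
        rw [Units.val_mul, Units.val_pow_eq_pow_val, Units.val_pow_eq_pow_val, hS, hT]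
      have hU : P * (S ^ m * T ^ n) * P⁻¹ = T := by
        apply Units.ext
        rw [Units.val_mul, Units.val_mul, hXc, hP, hT]
      have h2 := isConj_iff.mpr ⟨P, hU⟩
      have h3 := φq.map_isConj h2
      rw [_root_.map_mul, _root_.map_pow, _root_.map_pow] at h3
      exact h3
    rw [ham] at ha1 ⊢
    rw [hbm] at hb1 ⊢
    exact (hconj m n (hnz m n ha1)).trans ((hconj m' n' (hnz m' n' hb1)).symm)
end

section
/- Let p be a prime and let k be a natural number with 0 ≤ k ≤ p. In the polynomial ring ℤ[x₁, …, x_p, t] one has σ_k(x₁ + t, …, x_p + t) = Σ_{i=0}^{k} C(p − k + i, i) · t^i · σ_{k−i}(x₁, …, x_p), where C(n, i) denotes the binomial coefficient. -/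
open MvPolynomial
open Finset

theorem count_supersets (p k : ℕ) (T : Finset (Fin p)) (hTk : T.card ≤ k) :
    ((Finset.powersetCard k (univ : Finset (Fin p))).filter (fun S => T ⊆ S)).card
      = (p - T.card).choose (k - T.card) := by
  have h : ((univ : Finset (Fin p)) \ T).card = p - T.card := by
    rw [Finset.card_sdiff_of_subset (subset_univ T), Finset.card_univ, Fintype.card_fin]
  rw [← h, ← Finset.card_powersetCard (k - T.card) (univ \ T)]
  apply Finset.card_nbij' (fun S => S \ T) (fun U => U ∪ T)
  · intro S hS
    simp only [mem_coe, mem_filter, mem_powersetCard_univ] at hS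
    simp only [mem_coe, mem_powersetCard]
    exact ⟨sdiff_subset_sdiff (subset_univ S) le_rfl,
      by rw [Finset.card_sdiff_of_subset hS.2, hS.1]⟩
  · intro U hU
    simp only [mem_coe, mem_powersetCard] at hU
    have hUT : Disjoint U T := disjoint_of_subset_left hU.1 sdiff_disjoint
    simp only [mem_coe, mem_filter, mem_powersetCard_univ]
    constructor
    · rw [Finset.card_union_of_disjoint hUT, hU.2]; omega
    · exact subset_union_right
  · intro S hS
    simp only [mem_coe, mem_filter, mem_powersetCard_univ] at hS
    simp only [sdiff_union_self_eq_union, Finset.union_eq_left.2 hS.2]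
  · intro U hU
    simp only [mem_coe, mem_powersetCard] at hU
    have hUT : Disjoint U T := disjoint_of_subset_left hU.1 sdiff_disjoint
    exact Finset.union_sdiff_cancel_right hUT

/-- Let `p` be a prime and `0 ≤ k ≤ p`.  In `ℤ[x₁, …, x_p, t]` one has
`σ_k(x₁ + t, …, x_p + t) = Σ_{i=0}^{k} C(p-k+i, i) · t^i · σ_{k-i}(x₁, …, x_p)`,
where `σ_j` is the `j`-th elementary symmetric polynomial.  Here the ambient ring is
`MvPolynomial (Option (Fin p)) ℤ`, with `t = X none` and `x_i = X (some i)`. -/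
theorem stmt_12 (p k : ℕ) (hp : p.Prime) (hk : k ≤ p) :
    aeval (fun i : Fin p => X (some i) + (X none : MvPolynomial (Option (Fin p)) ℤ))
        (esymm (Fin p) ℤ k) =
      ∑ i ∈ Finset.range (k + 1),
        (Nat.choose (p - k + i) i : MvPolynomial (Option (Fin p)) ℤ) * X none ^ i *
          rename some (esymm (Fin p) ℤ (k - i)) := by
  rw [esymm]
  simp only [map_sum]
  have step1 : ∀ S ∈ Finset.powersetCard k (univ : Finset (Fin p)),
      aeval (fun i : Fin p => X (some i) + (X none : MvPolynomial (Option (Fin p)) ℤ))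
        (∏ i ∈ S, (X i : MvPolynomial (Fin p) ℤ))
      = ∑ T ∈ S.powerset,
          (∏ i ∈ T, (X (some i) : MvPolynomial (Option (Fin p)) ℤ)) * X none ^ (k - T.card) := by
    intro S hS
    rw [mem_powersetCard_univ] at hS
    rw [map_prod]
    simp only [aeval_X]
    rw [Finset.prod_add]
    refine Finset.sum_congr rfl fun T hT => ?_
    rw [Finset.mem_powerset] at hT
    rw [Finset.prod_const, Finset.card_sdiff_of_subset hT, hS]
  rw [Finset.sum_congr rfl step1]
  rw [Finset.sum_comm' (s' := fun T => (Finset.powersetCard k (univ : Finset (Fin p))).filter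
      (fun S => T ⊆ S)) (t' := (univ : Finset (Fin p)).powerset)
      (fun S T => by
        simp only [Finset.mem_filter, Finset.mem_powerset, Finset.mem_powersetCard_univ]
        constructor
        · rintro ⟨h1, h2⟩; exact ⟨⟨h1, h2⟩, h2.trans (Finset.subset_univ _)⟩
        · rintro ⟨⟨h1, h2⟩, _⟩; exact ⟨h1, h2⟩)]
  simp only [Finset.sum_const, nsmul_eq_mul]
  rw [Finset.sum_powerset, Finset.card_univ, Fintype.card_fin]
  rw [← Finset.sum_subset (Finset.range_subset_range.2 (by omega : k + 1 ≤ p + 1))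
      (fun j hj hj' => ?_)]
  · rw [← Finset.sum_range_reflect]
    refine Finset.sum_congr rfl fun j hj => ?_
    rw [Finset.mem_range] at hj
    have h1 : k + 1 - 1 - j = k - j := by omega
    rw [h1, esymm]
    simp only [map_sum, map_prod, rename_X, Finset.mul_sum]
    refine Finset.sum_congr rfl fun T hT => ?_
    rw [Finset.mem_powersetCard_univ] at hT
    have h2 : p - T.card = p - k + j := by omega
    have h3 : k - T.card = j := by omega
    rw [count_supersets p k T (by omega), h2, h3]
    ring
  · -- j ∈ range (p+1), j ∉ range (k+1): inner sum vanishes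
    rw [Finset.mem_range] at hj
    rw [Finset.mem_range, not_lt] at hj'
    apply Finset.sum_eq_zero
    intro T hT
    rw [Finset.mem_powersetCard_univ] at hT
    have : ((Finset.powersetCard k (univ : Finset (Fin p))).filter (fun S => T ⊆ S)) = ∅ := by
      rw [Finset.filter_eq_empty_iff]
      intro S hS
      rw [Finset.mem_powersetCard_univ] at hS
      intro hTS
      have := Finset.card_le_card hTS
      omega
    rw [this]
    simp
end

section
/- Let p be a prime and let G be a subgroup of the symmetric group S_p, acting on ℤ[x₁, …, x_p] by permuting the variables. If f ∈ ℤ[x₁, …, x_p] satisfies g·f − f ∈ (σ₁) for every g ∈ G, then there exists h ∈ ℤ[x₁, …, x_p] with g·h = h for every g ∈ G and f − h ∈ (σ₁). Equivalently, the projection ℤ[x₁, …, x_p] → ℤ[x₁, …, x_p]/(σ₁) maps the G-invariant subring onto the G-invariants of the quotient, inducing an isomorphism (ℤ[x₁,…,x_p]^G)/(σ₁·ℤ[x₁,…,x_p]^G) ≅ (ℤ[x₁,…,x_p]/(σ₁))^G. -/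
open MvPolynomial

namespace Stmt13Aux

variable {p : ℕ}

/-- Action of a permutation on monomial exponent vectors. -/
noncomputable def act (g : Equiv.Perm (Fin p)) (d : Fin p →₀ ℕ) : Fin p →₀ ℕ := d.mapDomain ⇑g

lemma act_mul (g h : Equiv.Perm (Fin p)) (d : Fin p →₀ ℕ) :
    act (g * h) d = act g (act h d) := by
  simp [act, Equiv.Perm.coe_mul, Finsupp.mapDomain_comp]

lemma act_one (d : Fin p →₀ ℕ) : act (1 : Equiv.Perm (Fin p)) d = d := by
  simp [act, Equiv.Perm.coe_one, Finsupp.mapDomain_id]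

lemma act_inv_act (g : Equiv.Perm (Fin p)) (d : Fin p →₀ ℕ) :
    act g⁻¹ (act g d) = d := by
  rw [← act_mul, inv_mul_cancel, act_one]

lemma act_act_inv (g : Equiv.Perm (Fin p)) (d : Fin p →₀ ℕ) :
    act g (act g⁻¹ d) = d := by
  rw [← act_mul, mul_inv_cancel, act_one]

lemma coeff_rename_act (g : Equiv.Perm (Fin p)) (q : MvPolynomial (Fin p) ℤ)
    (d : Fin p →₀ ℕ) : (rename ⇑g q).coeff (act g d) = q.coeff d :=
  coeff_rename_mapDomain ⇑g g.injective q d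

lemma coeff_rename' (g : Equiv.Perm (Fin p)) (q : MvPolynomial (Fin p) ℤ)
    (d : Fin p →₀ ℕ) : (rename ⇑g q).coeff d = q.coeff (act g⁻¹ d) := by
  have := coeff_rename_act g q (act g⁻¹ d)
  rwa [act_act_inv] at this

/-- The orbit equivalence relation on exponent vectors. -/
def orbSetoid (G : Subgroup (Equiv.Perm (Fin p))) : Setoid (Fin p →₀ ℕ) where
  r d e := ∃ g : G, act (g : Equiv.Perm (Fin p)) e = d
  iseqv := by
    constructor
    · exact fun d => ⟨1, by simp [act_one]⟩
    · rintro d e ⟨g, hg⟩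
      exact ⟨g⁻¹, by rw [← hg]; simpa using act_inv_act (g : Equiv.Perm (Fin p)) e⟩
    · rintro d e f' ⟨g, hg⟩ ⟨h, hh⟩
      exact ⟨g * h, by rw [Subgroup.coe_mul, act_mul, hh, hg]⟩

end Stmt13Aux

open Stmt13Aux

/-- Let `p` be a prime and `G` a subgroup of `S_p` acting on `ℤ[x₁, …, x_p]` by
permuting the variables.  If `f` satisfies `g·f - f ∈ (σ₁)` for all `g ∈ G`, then there
is an `h` with `g·h = h` for all `g ∈ G` and `f - h ∈ (σ₁)`; i.e. the `G`-invariant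
subring surjects onto the `G`-invariants of `ℤ[x₁, …, x_p]/(σ₁)`. -/
theorem stmt_13 (p : ℕ) (hp : p.Prime) (G : Subgroup (Equiv.Perm (Fin p)))
    (f : MvPolynomial (Fin p) ℤ)
    (hf : ∀ g ∈ G, rename (⇑g) f - f ∈
      Ideal.span {(∑ i : Fin p, X i : MvPolynomial (Fin p) ℤ)}) :
    ∃ h : MvPolynomial (Fin p) ℤ,
      (∀ g ∈ G, rename (⇑g) h = h) ∧
      f - h ∈ Ideal.span {(∑ i : Fin p, X i : MvPolynomial (Fin p) ℤ)} := by
  classical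
  set σ : MvPolynomial (Fin p) ℤ := ∑ i : Fin p, X i with hσdef
  have hσ0 : σ ≠ 0 := by
    intro h
    have := congrArg (eval (fun _ => (1:ℤ))) h
    simp [hσdef] at this
    exact hp.ne_zero this
  have hσinv : ∀ g : Equiv.Perm (Fin p), rename ⇑g σ = σ := by
    intro g
    simp only [hσdef, map_sum, rename_X]
    exact Fintype.sum_equiv g _ _ (fun i => rfl)
  -- the cocycle c
  have hdvd : ∀ g : G, ∃ q : MvPolynomial (Fin p) ℤ,
      rename (⇑(g : Equiv.Perm (Fin p))) f - f = σ * q := by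
    intro g
    exact Ideal.mem_span_singleton.mp (hf (g : Equiv.Perm (Fin p)) g.2)
  choose c hc using hdvd
  have hrename : ∀ g : G, rename (⇑(g : Equiv.Perm (Fin p))) f = f + σ * c g := by
    intro g; linear_combination hc g
  have hcmul : ∀ g h : G, c (g * h) = rename (⇑(g : Equiv.Perm (Fin p))) (c h) + c g := by
    intro g h
    apply mul_left_cancel₀ hσ0
    have h1 := hc (g * h)
    have : rename (⇑((g * h : G) : Equiv.Perm (Fin p))) f
        = rename (⇑(g : Equiv.Perm (Fin p))) (rename (⇑(h : Equiv.Perm (Fin p))) f) := by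
      rw [rename_rename]
      rfl
    rw [this, hrename h, map_add, map_mul, hσinv, hrename g] at h1
    linear_combination - h1
  have hcone : c 1 = 0 := by
    apply mul_left_cancel₀ hσ0
    have h1 := hc 1
    have : rename (⇑((1 : G) : Equiv.Perm (Fin p))) f = f := by
      simp [Equiv.Perm.coe_one]
    rw [this] at h1
    linear_combination - h1
  -- coefficient of a cocycle at a stabilized monomial vanishes
  have hstab : ∀ (s : G) (d : Fin p →₀ ℕ),
      act (s : Equiv.Perm (Fin p)) d = d → (c s).coeff d = 0 := by
    intro s d hsd
    have hinvd : act ((s : Equiv.Perm (Fin p)))⁻¹ d = d := by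
      conv_lhs => rw [← hsd]
      exact act_inv_act _ d
    have hpow : ∀ n : ℕ, (c (s ^ n)).coeff d = n * (c s).coeff d := by
      intro n
      induction n with
      | zero => simp [hcone]
      | succ n ih =>
        have : s ^ (n + 1) = s * s ^ n := by rw [pow_succ']
        rw [this, hcmul, coeff_add, coeff_rename', hinvd, ih]
        push_cast
        ring
    have hord := hpow (orderOf s)
    rw [pow_orderOf_eq_one, hcone, coeff_zero] at hord
    have hpos : (0 : ℤ) < (orderOf s : ℤ) := by
      exact_mod_cast orderOf_pos s
    have := hord.symm
    rcases mul_eq_zero.mp this with h | h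
    · exact absurd h hpos.ne'
    · exact h
  -- well-definedness
  have hwd : ∀ (g g' : G) (d e : Fin p →₀ ℕ),
      act (g : Equiv.Perm (Fin p)) e = d → act (g' : Equiv.Perm (Fin p)) e = d →
      (c g).coeff d = (c g').coeff d := by
    intro g g' d e hg hg'
    have hgg : g * (g⁻¹ * g') = g' := by group
    have hse : act ((g⁻¹ * g' : G) : Equiv.Perm (Fin p)) e = e := by
      rw [Subgroup.coe_mul, act_mul, hg']
      rw [← hg]
      simpa using act_inv_act (g : Equiv.Perm (Fin p)) e
    have h1 : c g' = rename (⇑(g : Equiv.Perm (Fin p))) (c (g⁻¹ * g')) + c g := by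
      rw [← hcmul, hgg]
    have h2 : act ((g : Equiv.Perm (Fin p)))⁻¹ d = e := by
      rw [← hg]; exact act_inv_act _ e
    rw [h1, coeff_add, coeff_rename', h2, hstab _ _ hse, zero_add]
  -- orbit representatives
  set rep : (Fin p →₀ ℕ) → (Fin p →₀ ℕ) :=
    fun d => (Quotient.mk (orbSetoid G) d).out with hrepdef
  have hrep : ∀ d, ∃ g : G, act (g : Equiv.Perm (Fin p)) (rep d) = d := by
    intro d
    have h := Quotient.mk_out (s := orbSetoid G) d
    exact (orbSetoid G).iseqv.symm h
  choose γ hγ using hrep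
  have hreporb : ∀ (g : G) (d : Fin p →₀ ℕ),
      rep (act (g : Equiv.Perm (Fin p)) d) = rep d := by
    intro g d
    have : (Quotient.mk (orbSetoid G) (act (g : Equiv.Perm (Fin p)) d))
        = Quotient.mk (orbSetoid G) d := Quotient.sound ⟨g, rfl⟩
    simp only [hrepdef]
    rw [this]
  -- the element u
  set S : Finset (Fin p →₀ ℕ) := Finset.univ.biUnion (fun g : G => (c g).support) with hSdef
  set u : MvPolynomial (Fin p) ℤ :=
    ∑ d ∈ S, monomial d ((c (γ d)).coeff d) with hudef
  have hucoeff : ∀ e, u.coeff e = (c (γ e)).coeff e := by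
    intro e
    rw [hudef]
    rw [coeff_sum]
    simp only [coeff_monomial]
    rw [Finset.sum_ite_eq' S e (fun d => (c (γ d)).coeff d)]
    by_cases he : e ∈ S
    · simp [he]
    · simp only [he, if_false]
      symm
      rw [← notMem_support_iff]
      intro hmem
      exact he (Finset.mem_biUnion.mpr ⟨γ e, Finset.mem_univ _, hmem⟩)
  -- the key identity: rename g u = u - c g
  have hkey : ∀ g : G, rename (⇑(g : Equiv.Perm (Fin p))) u = u - c g := by
    intro g
    apply MvPolynomial.ext
    intro d
    set d' : Fin p →₀ ℕ := act ((g : Equiv.Perm (Fin p)))⁻¹ d with hd'def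
    have hgd' : act (g : Equiv.Perm (Fin p)) d' = d := act_act_inv _ d
    have hrepd : rep d' = rep d := by
      rw [← hgd', hreporb g d']
    have hcomb : act ((g * γ d' : G) : Equiv.Perm (Fin p)) (rep d) = d := by
      rw [Subgroup.coe_mul, act_mul, ← hrepd, hγ d', hgd']
    have hwd' : (c (γ d)).coeff d = (c (g * γ d')).coeff d :=
      hwd (γ d) (g * γ d') d (rep d) (hγ d) hcomb
    rw [coeff_rename', coeff_sub, hucoeff, hucoeff, ← hd'def, hwd', hcmul,
      coeff_add, coeff_rename', ← hd'def]
    ring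
  -- conclusion
  refine ⟨f + σ * u, ?_, ?_⟩
  · intro g hg
    have h1 := hkey ⟨g, hg⟩
    have h2 := hrename ⟨g, hg⟩
    rw [map_add, map_mul, hσinv]
    rw [show ((⟨g, hg⟩ : G) : Equiv.Perm (Fin p)) = g from rfl] at h1 h2
    rw [h1, h2]
    ring
  · exact Ideal.mem_span_singleton.mpr ⟨-u, by ring⟩
end

section
/- Let p ≥ 2 and m ≥ 1 be natural numbers. The number of partitions of m all of whose parts lie between 2 and p equals the number of partitions of m with all parts at most p minus the number of partitions of m − 1 with all parts at most p; that is, r(m, p) = π(m, p) − π(m − 1, p). -/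
def partEquiv14 (n p : ℕ) (hp : 1 ≤ p) :
    {P : Nat.Partition (n + 1) // (∀ i ∈ P.parts, i ≤ p) ∧ 1 ∈ P.parts} ≃
      {P : Nat.Partition n // ∀ i ∈ P.parts, i ≤ p} where
  toFun P := ⟨⟨P.1.parts.erase 1,
      fun {i} hi => P.1.parts_pos (Multiset.mem_of_mem_erase hi),
      by
        have hs := P.1.parts_sum
        rw [← Multiset.cons_erase P.2.2, Multiset.sum_cons] at hs
        omega⟩,
    fun i hi => P.2.1 i (Multiset.mem_of_mem_erase hi)⟩
  invFun P := ⟨⟨1 ::ₘ P.1.parts,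
      fun {i} hi => by
        rcases Multiset.mem_cons.1 hi with h | h
        · simp [h]
        · exact P.1.parts_pos h,
      by rw [Multiset.sum_cons, P.1.parts_sum]; omega⟩,
    ⟨fun i hi => by
        rcases Multiset.mem_cons.1 hi with h | h
        · omega
        · exact P.2 i h,
      Multiset.mem_cons_self 1 _⟩⟩
  left_inv P := by
    apply Subtype.ext
    apply Nat.Partition.ext
    exact Multiset.cons_erase P.2.2
  right_inv P := by
    apply Subtype.ext
    apply Nat.Partition.ext
    simp [Multiset.erase_cons_head]

/-- Let `p ≥ 2` and `m ≥ 1`.  The number of partitions of `m` with all parts in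
`[2, p]` equals the number of partitions of `m` with all parts at most `p` minus the
number of partitions of `m - 1` with all parts at most `p`. -/
theorem stmt_14 (p m : ℕ) (hp : 2 ≤ p) (hm : 1 ≤ m) :
    Nat.card {P : Nat.Partition m // ∀ i ∈ P.parts, 2 ≤ i ∧ i ≤ p} =
      Nat.card {P : Nat.Partition m // ∀ i ∈ P.parts, i ≤ p} -
        Nat.card {P : Nat.Partition (m - 1) // ∀ i ∈ P.parts, i ≤ p} := by
  obtain ⟨n, rfl⟩ : ∃ n, m = n + 1 := ⟨m - 1, by omega⟩
  show Nat.card {P : Nat.Partition (n + 1) // ∀ i ∈ P.parts, 2 ≤ i ∧ i ≤ p} =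
      Nat.card {P : Nat.Partition (n + 1) // ∀ i ∈ P.parts, i ≤ p} -
        Nat.card {P : Nat.Partition n // ∀ i ∈ P.parts, i ≤ p}
  have key : Nat.card {P : Nat.Partition n // ∀ i ∈ P.parts, i ≤ p} =
      Nat.card {P : Nat.Partition (n + 1) // (∀ i ∈ P.parts, i ≤ p) ∧ 1 ∈ P.parts} :=
    Nat.card_eq_of_bijective _ (partEquiv14 n p (by omega)).symm.bijective
  rw [key]
  have hcongr : Nat.card {P : Nat.Partition (n + 1) // ∀ i ∈ P.parts, 2 ≤ i ∧ i ≤ p} =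
      Nat.card {P : Nat.Partition (n + 1) // (∀ i ∈ P.parts, i ≤ p) ∧ 1 ∉ P.parts} := by
    apply Nat.card_congr
    apply Equiv.subtypeEquivRight
    intro P
    constructor
    · intro h
      refine ⟨fun i hi => (h i hi).2, fun h1 => by have := (h 1 h1).1; omega⟩
    · intro ⟨h1, h2⟩ i hi
      refine ⟨?_, h1 i hi⟩
      have h0 : 0 < i := P.parts_pos hi
      have hne : i ≠ 1 := fun h => h2 (h ▸ hi)
      omega
  rw [hcongr]
  classical
  have e : {P : Nat.Partition (n + 1) // ∀ i ∈ P.parts, i ≤ p} ≃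
      {P : Nat.Partition (n + 1) // (∀ i ∈ P.parts, i ≤ p) ∧ 1 ∈ P.parts} ⊕
      {P : Nat.Partition (n + 1) // (∀ i ∈ P.parts, i ≤ p) ∧ 1 ∉ P.parts} :=
    (Equiv.sumCompl (fun y : {P : Nat.Partition (n + 1) // ∀ i ∈ P.parts, i ≤ p} =>
        1 ∈ y.1.parts)).symm.trans
      (Equiv.sumCongr
        (Equiv.subtypeSubtypeEquivSubtypeInter (fun P : Nat.Partition (n+1) => ∀ i ∈ P.parts, i ≤ p)
          (fun P => 1 ∈ P.parts))
        (Equiv.subtypeSubtypeEquivSubtypeInter (fun P : Nat.Partition (n+1) => ∀ i ∈ P.parts, i ≤ p)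
          (fun P => 1 ∉ P.parts)))
  have hA := Nat.card_congr e
  rw [Nat.card_sum] at hA
  omega
end

section
/- Let p be a prime and let f ∈ ℤ[x₁, …, x_p] be homogeneous of degree d, invariant under the cyclic permutation of the variables x₁ ↦ x₂ ↦ ⋯ ↦ x_p ↦ x₁. If p does not divide d, then p divides the integer f(1, 1, …, 1). -/
open MvPolynomial

/-- Let `p` be a prime and `f ∈ ℤ[x₁, …, x_p]` homogeneous of degree `d` and invariant
under the cyclic permutation `x₁ ↦ x₂ ↦ ⋯ ↦ x_p ↦ x₁` of the variables.  If `p ∤ d`,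
then `p` divides `f(1, 1, …, 1)`. -/
theorem stmt_15 (p : ℕ) (hp : p.Prime) (d : ℕ) (f : MvPolynomial (Fin p) ℤ)
    (hhom : f.IsHomogeneous d)
    (hinv : rename (⇑(finRotate p)) f = f)
    (hd : ¬ p ∣ d) :
    (p : ℤ) ∣ eval (fun _ => (1 : ℤ)) f := by
  haveI := Fact.mk hp
  obtain ⟨n, rfl⟩ : ∃ n, p = n + 1 := ⟨p - 1, (Nat.succ_pred_eq_of_pos hp.pos).symm⟩
  set σ : Equiv.Perm (Fin (n+1)) := finRotate (n+1) with hσ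
  -- coefficients are invariant under the rotation of exponent vectors
  have hcoeff : ∀ m : Fin (n+1) →₀ ℕ,
      coeff (Finsupp.equivMapDomain σ m) f = coeff m f := by
    intro m
    rw [Finsupp.equivMapDomain_eq_mapDomain]
    conv_lhs => rw [← hinv]
    exact coeff_rename_mapDomain σ σ.injective f m
  -- the weight function
  set w : (Fin (n+1) →₀ ℕ) → ZMod (n+1) :=
    fun m => ∑ j : Fin (n+1), (j.val : ZMod (n+1)) * (m j : ZMod (n+1)) with hwdef
  -- every exponent vector in the support has coordinate sum d
  have hdeg : ∀ m ∈ f.support, (∑ j : Fin (n+1), (m j : ZMod (n+1))) = (d : ZMod (n+1)) := by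
    intro m hm
    have h1 : (Finsupp.weight 1) m = d := hhom (mem_support_iff.mp hm)
    have h2 : ∑ j : Fin (n+1), m j = d := by
      rw [← h1, show (Finsupp.weight 1 : (Fin (n+1) →₀ ℕ) →+ ℕ) = Finsupp.weight (fun _ => 1) from rfl,
        ← Finsupp.degree_eq_weight_one, Finsupp.degree_apply]
      exact (Finset.sum_subset (Finset.subset_univ _)
        (fun x _ hx => Finsupp.notMem_support_iff.mp hx)).symm
    rw [← h2]; push_cast; ring
  -- rotating shifts the weight by d
  have hw : ∀ m ∈ f.support,
      w (Finsupp.equivMapDomain σ m) = w m + (d : ZMod (n+1)) := by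
    intro m hm
    have key : w (Finsupp.equivMapDomain σ m)
        = ∑ j : Fin (n+1), (((σ j).val : ZMod (n+1))) * (m j : ZMod (n+1)) := by
      simp only [hwdef]
      rw [← Equiv.sum_comp σ (fun j => (j.val : ZMod (n+1)) *
        ((Finsupp.equivMapDomain σ m) j : ZMod (n+1)))]
      refine Finset.sum_congr rfl fun j _ => ?_
      simp [Finsupp.equivMapDomain_apply]
    rw [key, ← hdeg m hm]
    simp only [hwdef]
    rw [← Finset.sum_add_distrib]
    refine Finset.sum_congr rfl fun j _ => ?_
    have hrot : (((σ j).val : ZMod (n+1))) = (j.val : ZMod (n+1)) + 1 := by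
      rw [hσ, finRotate_succ_apply]
      simp [Fin.val_add, ZMod.natCast_mod, Fin.val_one']
    rw [hrot]; ring
  -- fiber sums
  set S : ZMod (n+1) → ℤ :=
    fun c => ∑ m ∈ f.support.filter (fun m => w m = c), coeff m f with hSdef
  -- shifting fibers
  have hshift : ∀ c : ZMod (n+1), S (c + d) = S c := by
    intro c
    simp only [hSdef]
    refine (Finset.sum_bij (fun m _ => Finsupp.equivMapDomain σ m) ?_ ?_ ?_ ?_).symm
    · intro m hm
      obtain ⟨hm1, hm2⟩ := Finset.mem_filter.mp hm
      refine Finset.mem_filter.mpr ⟨?_, ?_⟩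
      · rwa [mem_support_iff, hcoeff, ← mem_support_iff]
      · rw [hw m hm1, hm2]
    · intro a _ b _ hab
      exact (Finsupp.equivCongrLeft σ).injective hab
    · intro m' hm'
      obtain ⟨hm1, hm2⟩ := Finset.mem_filter.mp hm'
      set m₀ := (Finsupp.equivCongrLeft σ).symm m' with hm₀
      have he : Finsupp.equivMapDomain σ m₀ = m' :=
        (Finsupp.equivCongrLeft σ).apply_symm_apply m'
      have hmem : m₀ ∈ f.support := by
        rw [mem_support_iff, ← hcoeff m₀, he, ← mem_support_iff]; exact hm1
      refine ⟨m₀, Finset.mem_filter.mpr ⟨hmem, ?_⟩, he⟩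
      have h3 := hw m₀ hmem
      rw [he, hm2] at h3
      exact (add_right_cancel h3).symm
    · intro m _
      rw [hcoeff]
  -- evaluation at all-ones is the sum of the coefficients
  have heval : eval (fun _ => (1:ℤ)) f = ∑ m ∈ f.support, coeff m f := by
    rw [eval_eq]; simp
  have hfib : ∑ c : ZMod (n+1), S c = ∑ m ∈ f.support, coeff m f :=
    Finset.sum_fiberwise _ _ _
  -- all fibers have equal sum
  have hball : ∀ c, S c = S 0 := by
    have hk : ∀ k : ℕ, S ((k : ZMod (n+1)) * d) = S 0 := by
      intro k
      induction k with
      | zero => simp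
      | succ k ih =>
        push_cast
        rw [add_mul, one_mul, hshift, ih]
    intro c
    have hdu : (d : ZMod (n+1)) ≠ 0 := by
      simpa [ZMod.natCast_eq_zero_iff] using hd
    obtain ⟨k, hk2⟩ : ∃ k : ℕ, (k : ZMod (n+1)) * d = c :=
      ⟨(c * (d : ZMod (n+1))⁻¹).val, by rw [ZMod.natCast_val, ZMod.cast_id]; field_simp⟩
    rw [← hk2]
    exact hk k
  have hfinal : eval (fun _ => (1:ℤ)) f = ((n+1 : ℕ) : ℤ) * S 0 := by
    rw [heval, ← hfib, Finset.sum_congr rfl (fun c _ => hball c), Finset.sum_const,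
      Finset.card_univ, ZMod.card, nsmul_eq_mul]
  rw [hfinal]
  exact Dvd.intro _ rfl
end
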